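/- arXiv:2201.01351 — 11 statements merged into one kernel-verified Lean document; each statement's English description precedes it below -/
import Mathlib

section
/- For every integer n ≥ 2, the number -1/(1+cos(π/n)) is the greatest element of the set of values ∑_{i=1}^{n} ∑_{j=1}^{n} |i-j|·f(i)·f(j), taken over all functions f : {1,…,n} → ℝ satisfying ∑_{i=1}^{n} f(i) = 0 and ∑_{i=1}^{n} f(i)² = 1. (Equivalently, the quadratic embedding constant of the path graph P_n equals -1/(1+cos(π/n)), and this supremum is attained.) -/
open Real Finset


lemma sin_diff_id (x θ : ℝ) : sin (x+θ) - sin (x-θ) = 2 * sin θ * cos x := by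
  rw [sin_add, sin_sub]; ring

lemma sin_sum_id (x θ : ℝ) : sin (x+θ) + sin (x-θ) = 2 * cos θ * sin x := by
  rw [sin_add, sin_sub]; ring

lemma sum_cos_even (n : ℕ) (θ : ℝ) (hs : sin θ ≠ 0) (hnθ : (n:ℝ)*θ = π) :
    ∑ k ∈ range n, cos (2*k*θ) = 0 := by
  have key := Finset.sum_range_sub (fun k : ℕ => sin (2*k*θ - θ)) n
  have step : ∀ k ∈ range n, sin (2*(k+1:ℕ)*θ - θ) - sin (2*(k:ℕ)*θ - θ)
      = 2 * sin θ * cos (2*k*θ) := by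
    intro k _
    have h := sin_diff_id (2*(k:ℝ)*θ) θ
    push_cast
    rw [← h]
    ring_nf
  rw [Finset.sum_congr rfl step] at key
  have h2n : 2*(n:ℝ)*θ - θ = 2*π - θ := by linear_combination 2*hnθ
  have hval : sin (2*π - θ) = - sin θ := by
    rw [sin_sub, sin_two_pi, cos_two_pi]; ring
  have hz : 2 * sin θ * ∑ k ∈ range n, cos (2*k*θ) = 0 := by
    rw [Finset.mul_sum, key]
    push_cast
    rw [h2n, hval]
    norm_num
  rcases mul_eq_zero.1 hz with h | h
  · exact absurd (by linarith : sin θ = 0) hs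
  · exact h

lemma sum_cos_odd (n : ℕ) (θ : ℝ) (hs : sin θ ≠ 0) (hnθ : (n:ℝ)*θ = π) :
    ∑ k ∈ range n, cos ((2*k+1)*θ) = 0 := by
  have key := Finset.sum_range_sub (fun k : ℕ => sin (2*k*θ)) n
  have step : ∀ k ∈ range n, sin (2*(k+1:ℕ)*θ) - sin (2*(k:ℕ)*θ)
      = 2 * sin θ * cos ((2*k+1)*θ) := by
    intro k _
    have h := sin_diff_id ((2*(k:ℝ)+1)*θ) θ
    push_cast
    rw [show 2*((k:ℝ)+1)*θ = (2*(k:ℝ)+1)*θ + θ by ring,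
        show 2*(k:ℝ)*θ = (2*(k:ℝ)+1)*θ - θ by ring, h]
  rw [Finset.sum_congr rfl step] at key
  have h2n : 2*(n:ℝ)*θ = 2*π := by linear_combination 2*hnθ
  have hz : 2 * sin θ * ∑ k ∈ range n, cos ((2*k+1)*θ) = 0 := by
    rw [Finset.mul_sum, key]
    push_cast
    rw [h2n]
    norm_num [Real.sin_two_pi]
  rcases mul_eq_zero.1 hz with h | h
  · exact absurd (by linarith : sin θ = 0) hs
  · exact h

lemma sum_sin_sq (n : ℕ) (θ : ℝ) (hs : sin θ ≠ 0) (hnθ : (n:ℝ)*θ = π) :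
    ∑ k ∈ range n, (sin (k*θ))^2 = n/2 := by
  have step : ∀ k ∈ range n, (sin (k*θ))^2 = 1/2 - cos (2*k*θ)/2 := by
    intro k _
    have h := Real.cos_sq (k*θ)
    have h2 : sin ((k:ℝ)*θ)^2 = 1 - cos ((k:ℝ)*θ)^2 := Real.sin_sq _
    rw [h2, h]
    ring_nf
  rw [Finset.sum_congr rfl step, Finset.sum_sub_distrib]
  simp only [Finset.sum_const, Finset.card_range, nsmul_eq_mul]
  rw [← Finset.sum_div, sum_cos_even n θ hs hnθ]
  ring

lemma sum_sin_sq_shift (n : ℕ) (θ : ℝ) (hs : sin θ ≠ 0) (hnθ : (n:ℝ)*θ = π) :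
    ∑ k ∈ range n, (sin ((k+1)*θ))^2 = n/2 := by
  have h1 : ∑ k ∈ range (n+1), (sin (k*θ))^2
      = (∑ k ∈ range n, (sin ((k+1)*θ))^2) + (sin ((0:ℕ)*θ))^2 := by
    rw [Finset.sum_range_succ']
    congr 1
    apply Finset.sum_congr rfl
    intro x _
    push_cast
    ring_nf
  have h2 : ∑ k ∈ range (n+1), (sin (k*θ))^2
      = ∑ k ∈ range n, (sin (k*θ))^2 + (sin (n*θ))^2 := Finset.sum_range_succ _ _
  have h3 : sin ((n:ℝ)*θ) = 0 := by rw [hnθ]; exact Real.sin_pi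
  have h4 := sum_sin_sq n θ hs hnθ
  rw [h4] at h2
  rw [h3] at h2
  simp at h1 h2
  linarith

lemma sum_sin_cross (n : ℕ) (θ : ℝ) (hs : sin θ ≠ 0) (hnθ : (n:ℝ)*θ = π) :
    ∑ k ∈ range n, sin ((k+1)*θ) * sin (k*θ) = n * cos θ / 2 := by
  have step : ∀ k ∈ range n, sin ((k+1:ℝ)*θ) * sin (k*θ)
      = cos θ/2 - cos ((2*k+1)*θ)/2 := by
    intro k _
    have ha : cos (((k+1:ℝ)*θ) - (k*θ)) = cos ((k+1:ℝ)*θ) * cos ((k:ℝ)*θ) + sin ((k+1:ℝ)*θ) * sin ((k:ℝ)*θ) := Real.cos_sub _ _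
    have hb : cos (((k+1:ℝ)*θ) + (k*θ)) = cos ((k+1:ℝ)*θ) * cos ((k:ℝ)*θ) - sin ((k+1:ℝ)*θ) * sin ((k:ℝ)*θ) := Real.cos_add _ _
    have h1 : ((k+1:ℝ)*θ) - (k*θ) = θ := by ring
    have h2 : ((k+1:ℝ)*θ) + (k*θ) = (2*k+1)*θ := by ring
    rw [h1] at ha; rw [h2] at hb
    linarith
  rw [Finset.sum_congr rfl step, Finset.sum_sub_distrib]
  simp only [Finset.sum_const, Finset.card_range, nsmul_eq_mul]
  rw [← Finset.sum_div, sum_cos_odd n θ hs hnθ]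
  ring


lemma abs_cast_sub (i j : ℕ) : |(i:ℝ) - j| = ((j-i:ℕ):ℝ) + ((i-j:ℕ):ℝ) := by
  rcases le_total i j with h | h
  · rw [Nat.sub_eq_zero_of_le h, Nat.cast_sub h, abs_sub_comm,
      abs_of_nonneg (sub_nonneg.2 (by exact_mod_cast h))]
    push_cast; ring
  · rw [Nat.sub_eq_zero_of_le h, Nat.cast_sub h,
      abs_of_nonneg (sub_nonneg.2 (by exact_mod_cast h))]
    push_cast; ring

lemma filter_le_eq (n k : ℕ) (h : k < n) :
    (range n).filter (fun i => i ≤ k) = range (k+1) := by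
  ext x; simp only [mem_filter, mem_range]; omega

lemma sum_ite_le (n k : ℕ) (h : k < n) (F : ℕ → ℝ) :
    ∑ i ∈ range n, (if i ≤ k then F i else 0) = ∑ i ∈ range (k+1), F i := by
  rw [← Finset.sum_filter, filter_le_eq n k h]

lemma sum_ite_gt (n k : ℕ) (h : k < n) (F : ℕ → ℝ) :
    ∑ j ∈ range n, (if k < j then F j else 0)
      = (∑ j ∈ range n, F j) - ∑ i ∈ range (k+1), F i := by
  have h2 := Finset.sum_filter_add_sum_filter_not (range n) (fun j => j ≤ k) F
  rw [filter_le_eq n k h] at h2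
  have h3 : ∑ j ∈ (range n).filter (fun j => ¬ j ≤ k), F j
      = ∑ j ∈ range n, (if k < j then F j else 0) := by
    rw [Finset.sum_filter]
    apply Finset.sum_congr rfl
    intro x _
    simp [not_le]
  linarith [h2, h3]

lemma card_ite_count (n i j : ℕ) (hj : j < n) :
    ∑ k' ∈ range (n-1), (if i ≤ k' ∧ k' < j then (1:ℝ) else 0) = ((j-i:ℕ):ℝ) := by
  rw [← Finset.sum_filter]
  have : (range (n-1)).filter (fun k' => i ≤ k' ∧ k' < j) = Finset.Ico i j := by
    ext x; simp only [mem_filter, mem_range, mem_Ico]; omega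
  rw [this]
  simp [Nat.card_Ico]

lemma quad_form_eq (n : ℕ) (F : ℕ → ℝ) (h0 : ∑ i ∈ range n, F i = 0) :
    ∑ i ∈ range n, ∑ j ∈ range n, |(i:ℝ) - j| * F i * F j
      = -2 * ∑ k ∈ range (n-1), (∑ i ∈ range (k+1), F i)^2 := by
  have pointwise : ∀ i ∈ range n, ∀ j ∈ range n,
      |(i:ℝ) - j| * F i * F j
        = ∑ k ∈ range (n-1), ((if i ≤ k ∧ k < j then F i * F j else 0)
            + (if j ≤ k ∧ k < i then F i * F j else 0)) := by
    intro i hi j hj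
    rw [mem_range] at hi hj
    rw [Finset.sum_add_distrib]
    have e1 : ∑ k ∈ range (n-1), (if i ≤ k ∧ k < j then F i * F j else 0)
        = ((j-i:ℕ):ℝ) * (F i * F j) := by
      rw [← card_ite_count n i j hj, Finset.sum_mul]
      apply Finset.sum_congr rfl
      intro x _
      split_ifs <;> simp
    have e2 : ∑ k ∈ range (n-1), (if j ≤ k ∧ k < i then F i * F j else 0)
        = ((i-j:ℕ):ℝ) * (F i * F j) := by
      rw [← card_ite_count n j i hi, Finset.sum_mul]
      apply Finset.sum_congr rfl
      intro x _
      split_ifs <;> simp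
    rw [e1, e2, abs_cast_sub]
    ring
  rw [Finset.sum_congr rfl (fun i hi => Finset.sum_congr rfl (fun j hj => pointwise i hi j hj))]
  have swap1 : ∀ i ∈ range n,
      ∑ j ∈ range n, ∑ k ∈ range (n-1), ((if i ≤ k ∧ k < j then F i * F j else 0)
            + (if j ≤ k ∧ k < i then F i * F j else 0))
      = ∑ k ∈ range (n-1), ∑ j ∈ range n, ((if i ≤ k ∧ k < j then F i * F j else 0)
            + (if j ≤ k ∧ k < i then F i * F j else 0)) := by
    intro i _
    exact Finset.sum_comm
  rw [Finset.sum_congr rfl swap1, Finset.sum_comm, Finset.mul_sum]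
  apply Finset.sum_congr rfl
  intro k hk
  rw [mem_range] at hk
  have hkn : k < n := by omega
  have split : ∑ i ∈ range n, ∑ j ∈ range n,
        ((if i ≤ k ∧ k < j then F i * F j else 0) + (if j ≤ k ∧ k < i then F i * F j else 0))
      = (∑ i ∈ range n, ∑ j ∈ range n, (if i ≤ k ∧ k < j then F i * F j else 0))
        + (∑ i ∈ range n, ∑ j ∈ range n, (if j ≤ k ∧ k < i then F i * F j else 0)) := by
    rw [← Finset.sum_add_distrib]
    exact Finset.sum_congr rfl fun i _ => Finset.sum_add_distrib
  rw [split]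
  have e1 : ∑ i ∈ range n, ∑ j ∈ range n, (if i ≤ k ∧ k < j then F i * F j else 0)
      = (∑ i ∈ range n, (if i ≤ k then F i else 0))
        * (∑ j ∈ range n, (if k < j then F j else 0)) := by
    rw [Finset.sum_mul_sum]
    apply Finset.sum_congr rfl
    intro i _
    apply Finset.sum_congr rfl
    intro j _
    by_cases h1 : i ≤ k <;> by_cases h2 : k < j <;> simp [h1, h2]
  have e2 : ∑ i ∈ range n, ∑ j ∈ range n, (if j ≤ k ∧ k < i then F i * F j else 0)
      = (∑ i ∈ range n, (if k < i then F i else 0))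
        * (∑ j ∈ range n, (if j ≤ k then F j else 0)) := by
    rw [Finset.sum_mul_sum]
    apply Finset.sum_congr rfl
    intro i _
    apply Finset.sum_congr rfl
    intro j _
    by_cases h1 : j ≤ k <;> by_cases h2 : k < i <;> simp [h1, h2]
  rw [e1, e2, sum_ite_le n k hkn, sum_ite_gt n k hkn, h0]
  ring

lemma sin_pos_aux (n j : ℕ) (hn : 2 ≤ n) (hj : 1 ≤ j) (hj2 : j < n) :
    0 < sin ((j:ℝ) * (π/n)) := by
  have h0 : (0:ℝ) < n := by positivity
  apply sin_pos_of_pos_of_lt_pi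
  · have : (0:ℝ) < (j:ℝ) := by exact_mod_cast hj
    positivity
  · calc (j:ℝ) * (π/n) < n * (π/n) := by
          apply mul_lt_mul_of_pos_right
          · exact_mod_cast hj2
          · positivity
      _ = π := by field_simp
  
lemma key_ineq (n : ℕ) (hn : 2 ≤ n) (S : ℕ → ℝ) :
    0 ≤ cos (π/n) * ∑ k ∈ range (n-1), (S k)^2
        + ∑ k ∈ range (n-2), S k * S (k+1) := by
  set θ := π/(n:ℝ) with hθ
  have hns : (n:ℝ) ≠ 0 := by positivity
  set w : ℕ → ℝ := fun j => sin (j * θ) with hw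
  have hwpos : ∀ j : ℕ, 1 ≤ j → j < n → 0 < w j := fun j h1 h2 => sin_pos_aux n j hn h1 h2
  have hw0 : w 0 = 0 := by simp [hw]
  have hwn : w n = 0 := by
    have : (n:ℝ) * θ = π := by rw [hθ]; field_simp
    simp [hw, this]
  -- the three-term recurrence
  have hrec : ∀ j : ℕ, w (j+2) + w j = 2 * cos θ * w (j+1) := by
    intro j
    have := sin_sum_id (((j:ℝ)+1) * θ) θ
    have e1 : ((j:ℝ)+1)*θ + θ = ((j:ℝ)+2)*θ := by ring
    have e2 : ((j:ℝ)+1)*θ - θ = (j:ℝ)*θ := by ring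
    rw [e1, e2] at this
    simp only [hw]
    push_cast
    exact this
  -- Identity: sum of weighted squares equals cos θ * ∑ S^2
  have hA : ∑ k ∈ range (n-1), w (k+2)/(2*w (k+1)) * (S k)^2
      = ∑ k ∈ range (n-2), w (k+2)/(2*w (k+1)) * (S k)^2 := by
    have h1 : n - 1 = (n-2) + 1 := by omega
    rw [h1, Finset.sum_range_succ]
    have : w ((n-2)+2) = 0 := by
      have : (n-2)+2 = n := by omega
      rw [this, hwn]
    rw [this]
    simp
  have hB : ∑ k ∈ range (n-1), w k/(2*w (k+1)) * (S k)^2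
      = ∑ k ∈ range (n-2), w (k+1)/(2*w (k+2)) * (S (k+1))^2 := by
    have h1 : n - 1 = (n-2) + 1 := by omega
    rw [h1, Finset.sum_range_succ']
    rw [hw0]
    simp
  have hiden : ∑ k ∈ range (n-2), (w (k+2)/(2*w (k+1)) * (S k)^2
        + w (k+1)/(2*w (k+2)) * (S (k+1))^2)
      = cos θ * ∑ k ∈ range (n-1), (S k)^2 := by
    rw [Finset.sum_add_distrib, ← hA, ← hB, ← Finset.sum_add_distrib, Finset.mul_sum]
    apply Finset.sum_congr rfl
    intro j hj
    rw [mem_range] at hj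
    have hwj : w (j+1) ≠ 0 := ne_of_gt (hwpos (j+1) (by omega) (by omega))
    have := hrec j
    field_simp
    nlinarith [this, sq_nonneg (S j)]
  -- per-term AM-GM
  have hterm : ∀ k ∈ range (n-2),
      0 ≤ w (k+2)/(2*w (k+1)) * (S k)^2 + w (k+1)/(2*w (k+2)) * (S (k+1))^2
          + S k * S (k+1) := by
    intro k hk
    rw [mem_range] at hk
    have h1 : 0 < w (k+1) := hwpos (k+1) (by omega) (by omega)
    have h2 : 0 < w (k+2) := hwpos (k+2) (by omega) (by omega)
    have key : 0 ≤ (w (k+2) * S k + w (k+1) * S (k+1))^2 := sq_nonneg _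
    have hprod : 0 < w (k+1) * w (k+2) := mul_pos h1 h2
    have expand : w (k+2)/(2*w (k+1)) * (S k)^2 + w (k+1)/(2*w (k+2)) * (S (k+1))^2
          + S k * S (k+1)
        = (w (k+2) * S k + w (k+1) * S (k+1))^2 / (2 * w (k+1) * w (k+2)) := by
      field_simp
      ring
    rw [expand]
    exact div_nonneg key (by nlinarith [mul_pos h1 h2])
  have hsum := Finset.sum_nonneg hterm
  rw [Finset.sum_add_distrib, hiden] at hsum
  linarith

-- helpers

lemma one_add_cos_pos (n : ℕ) (hn : 2 ≤ n) : 0 < 1 + cos (π/n) := by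
  have h2 : (2:ℝ) ≤ n := by exact_mod_cast hn
  have hle : π/n ≤ π/2 := by
    apply div_le_div_of_nonneg_left pi_pos.le (by norm_num) h2 |>.trans_eq rfl
  have hge : 0 ≤ π/n := by positivity
  have := Real.cos_nonneg_of_mem_Icc ⟨by linarith [pi_pos, hge], hle⟩
  linarith

lemma final_bound (n : ℕ) (A B : ℝ) (hexp : (1:ℝ) = 2*A - 2*B)
    (hkey : 0 ≤ cos (π/(n:ℝ)) * A + B) (h1c : 0 < 1 + cos (π/(n:ℝ))) :
    -2*A ≤ -1/(1 + cos (π/(n:ℝ))) := by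
  have hge : 1 ≤ (2 + 2*cos (π/(n:ℝ))) * A := by nlinarith
  have hd : (1 + cos (π/(n:ℝ))) * (-1/(1 + cos (π/(n:ℝ)))) = -1 := by field_simp
  nlinarith [hge, h1c, hd]

/-- The quadratic embedding constant of the path graph `Pₙ` (vertices `1,…,n`,
distance `d(i,j) = |i-j|`) equals `-1/(1+cos(π/n))`, and the supremum is attained. -/
theorem qec_path_graph (n : ℕ) (hn : 2 ≤ n) :
    IsGreatest
      {y : ℝ | ∃ f : Fin n → ℝ,
        (∑ i, f i) = 0 ∧ (∑ i, (f i) ^ 2) = 1 ∧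
        y = ∑ i : Fin n, ∑ j : Fin n, |(i : ℝ) - (j : ℝ)| * f i * f j}
      (-1 / (1 + Real.cos (π / n))) := by
  have hn0 : (0:ℝ) < n := by positivity
  have hns : (n:ℝ) ≠ 0 := ne_of_gt hn0
  have hnθ : (n:ℝ) * (π/n) = π := by field_simp
  have hsθ : sin (π/n) ≠ 0 := ne_of_gt (sin_pos_aux n 1 hn le_rfl (by omega) |>.trans_eq (by norm_num))
  have h1c : 0 < 1 + cos (π/n) := one_add_cos_pos n hn
  constructor
  · -- membership: explicit optimizer
    set θ := π/(n:ℝ) with hθ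
    set c := cos θ with hc
    set t : ℝ := Real.sqrt (1/(n*(1+c))) with htdef
    have ht2 : t^2 = 1/(n*(1+c)) := Real.sq_sqrt (by positivity)
    set F : ℕ → ℝ := fun i => t * (-1)^i * (sin ((i+1)*θ) + sin (i*θ)) with hF
    set G : ℕ → ℝ := fun j => -t * (-1)^j * sin (j*θ) with hG
    have hGstep : ∀ i : ℕ, G (i+1) - G i = F i := by
      intro i
      simp only [hG, hF]
      push_cast [pow_succ]
      ring
    have hGsum : ∀ m : ℕ, ∑ i ∈ range m, F i = G m - G 0 := by
      intro m
      rw [← Finset.sum_range_sub G m]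
      exact Finset.sum_congr rfl fun i _ => (hGstep i).symm
    have hG0 : G 0 = 0 := by simp [hG]
    have hGn : G n = 0 := by
      simp only [hG]
      rw [hnθ, Real.sin_pi]
      ring
    have hsum0 : ∑ i ∈ range n, F i = 0 := by rw [hGsum, hG0, hGn]; ring
    have hSk : ∀ k : ℕ, (∑ i ∈ range (k+1), F i)^2 = t^2 * (sin ((k+1)*θ))^2 := by
      intro k
      rw [hGsum, hG0]
      simp only [hG]
      have hsq : ((-1:ℝ)^(k+1))^2 = 1 := by
        rw [← pow_mul, mul_comm, pow_mul]; norm_num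
      push_cast
      nlinarith [hsq]
    refine ⟨fun i => F i, ?_, ?_, ?_⟩
    · rw [Fin.sum_univ_eq_sum_range F n, hsum0]
    · rw [Fin.sum_univ_eq_sum_range (fun i => (F i)^2) n]
      have hterm : ∀ i ∈ range n, (F i)^2
          = t^2 * ((sin ((i+1)*θ))^2) + t^2 * ((sin (i*θ))^2)
            + 2*t^2 * (sin ((i+1)*θ) * sin (i*θ)) := by
        intro i _
        have hsq : ((-1:ℝ)^i)^2 = 1 := by
          rw [← pow_mul, mul_comm, pow_mul]; norm_num
        simp only [hF]
        nlinarith [hsq]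
      rw [Finset.sum_congr rfl hterm, Finset.sum_add_distrib, Finset.sum_add_distrib,
        ← Finset.mul_sum, ← Finset.mul_sum, ← Finset.mul_sum,
        sum_sin_sq n θ hsθ hnθ, sum_sin_sq_shift n θ hsθ hnθ, sum_sin_cross n θ hsθ hnθ]
      rw [ht2]
      field_simp
      ring
    · rw [show (∑ i : Fin n, ∑ j : Fin n, |(i : ℝ) - (j : ℝ)| * F i * F j)
          = ∑ i ∈ range n, ∑ j ∈ range n, |(i:ℝ) - j| * F i * F j by
        rw [← Fin.sum_univ_eq_sum_range (fun i => ∑ j ∈ range n, |(i:ℝ) - j| * F i * F j) n]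
        exact Finset.sum_congr rfl fun i _ =>
          (Fin.sum_univ_eq_sum_range (fun j => |((i:ℕ):ℝ) - j| * F i * F j) n)]
      rw [quad_form_eq n F hsum0]
      rw [Finset.sum_congr rfl (fun k _ => hSk k), ← Finset.mul_sum]
      have hshift : ∑ k ∈ range (n-1), (sin ((k+1)*θ))^2 = n/2 := by
        have h1 : ∑ k ∈ range ((n-1)+1), (sin ((k+1)*θ))^2
            = ∑ k ∈ range (n-1), (sin ((k+1)*θ))^2 + (sin (((n-1:ℕ)+1)*θ))^2 :=
          Finset.sum_range_succ _ _
        rw [show (n-1)+1 = n by omega] at h1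
        have h2 : sin (((n-1:ℕ)+1:ℝ)*θ) = 0 := by
          have : ((n-1:ℕ):ℝ) + 1 = (n:ℝ) := by
            have : (1:ℕ) ≤ n := by omega
            push_cast [Nat.cast_sub this]
            ring
          rw [this, hnθ, Real.sin_pi]
        rw [sum_sin_sq_shift n θ hsθ hnθ] at h1
        push_cast at h1 h2 ⊢
        rw [h2] at h1
        simp at h1
        linarith
      rw [hshift, ht2]
      field_simp
  · -- upper bound
    rintro y ⟨f, hf0, hf1, rfl⟩
    set F : ℕ → ℝ := fun i => if h : i < n then f ⟨i, h⟩ else 0 with hF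
    have hFval : ∀ i : Fin n, F (i:ℕ) = f i := by
      intro i
      simp only [hF, i.isLt, dif_pos]
    have h0 : ∑ i ∈ range n, F i = 0 := by
      rw [← Fin.sum_univ_eq_sum_range F n]
      rw [Finset.sum_congr rfl fun i _ => hFval i]
      exact hf0
    have h1 : ∑ i ∈ range n, (F i)^2 = 1 := by
      rw [← Fin.sum_univ_eq_sum_range (fun i => (F i)^2) n]
      rw [Finset.sum_congr rfl fun (i : Fin n) _ => by rw [hFval i]]
      exact hf1
    have hconv : (∑ i : Fin n, ∑ j : Fin n, |(i : ℝ) - (j : ℝ)| * f i * f j)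
        = ∑ i ∈ range n, ∑ j ∈ range n, |(i:ℝ) - j| * F i * F j := by
      rw [← Fin.sum_univ_eq_sum_range (fun i => ∑ j ∈ range n, |(i:ℝ) - j| * F i * F j) n]
      apply Finset.sum_congr rfl
      intro i _
      rw [← Fin.sum_univ_eq_sum_range (fun j => |((i:ℕ):ℝ) - j| * F i * F j) n]
      apply Finset.sum_congr rfl
      intro j _
      rw [hFval i, hFval j]
    rw [hconv, quad_form_eq n F h0]
    set S : ℕ → ℝ := fun k => ∑ i ∈ range (k+1), F i with hS
    -- expansion of 1 = ∑ F² ∈ terms of S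
    have hSlast : S (n-1) = 0 := by
      simp only [hS]
      rw [show n - 1 + 1 = n by omega]
      exact h0
    have hF0 : F 0 = S 0 := by simp [hS]
    have hFsucc : ∀ i : ℕ, F (i+1) = S (i+1) - S i := by
      intro i
      simp only [hS]
      rw [Finset.sum_range_succ]
      ring
    have hexp : (1:ℝ) = 2 * ∑ k ∈ range (n-1), (S k)^2
        - 2 * ∑ k ∈ range (n-2), S k * S (k+1) := by
      have e0 : ∑ i ∈ range n, (F i)^2
          = (∑ i ∈ range (n-1), (F (i+1))^2) + (F 0)^2 := by
        have := Finset.sum_range_succ' (fun i => (F i)^2) (n-1)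
        rw [show n-1+1 = n by omega] at this
        exact this
      have e1 : ∑ i ∈ range (n-1), (F (i+1))^2
          = ∑ i ∈ range (n-1), ((S (i+1))^2 + (S i)^2 - 2 * (S i * S (i+1))) := by
        apply Finset.sum_congr rfl
        intro i _
        rw [hFsucc i]
        ring
      have e2 : ∑ i ∈ range (n-1), (S (i+1))^2
          = ∑ i ∈ range (n-1), (S i)^2 - (S 0)^2 := by
        have := Finset.sum_range_succ' (fun i => (S i)^2) (n-1)
        have h3 := Finset.sum_range_succ (fun i => (S i)^2) (n-1)
        rw [hSlast] at h3
        -- this : ∑ i ∈ range (n-1+1), S i ^2 = ∑ i ∈ range (n-1), S (i+1)^2 + S 0 ^2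
        -- h3 : ∑ i ∈ range (n-1+1), S i ^2 = ∑ i ∈ range (n-1), S i ^2 + 0
        rw [this] at h3
        nlinarith [h3]
      have e3 : ∑ i ∈ range (n-1), S i * S (i+1)
          = ∑ i ∈ range (n-2), S i * S (i+1) := by
        have := Finset.sum_range_succ (fun i => S i * S (i+1)) (n-2)
        rw [show n-2+1 = n-1 by omega] at this
        rw [this, hSlast]
        ring
      rw [e0, e1] at h1
      rw [Finset.sum_sub_distrib, Finset.sum_add_distrib, e2, ← Finset.mul_sum, e3] at h1
      rw [hF0] at h1
      linarith
    have hkey := key_ineq n hn S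
    exact final_bound n (∑ k ∈ range (n-1), (S k)^2) (∑ k ∈ range (n-2), S k * S (k+1))
      hexp hkey h1c
end

section
/- The number -1/2 is the least upper bound of the set of values ∑_{i∈ℕ} ∑_{j∈ℕ} |i-j|·f(i)·f(j), taken over all finitely supported functions f : ℕ → ℝ satisfying ∑_{i} f(i) = 0 and ∑_{i} f(i)² = 1. (That is, QEC(ℕ) = -1/2 for ℕ regarded as the infinite path graph with edges {i,i+1}.) -/
section QECAux
open Finset


private lemma sum_indicator_le (N m : ℕ) (hm : m ≤ N) :
    ∑ k ∈ range N, (if m ≤ k then (1:ℝ) else 0) = (N : ℝ) - m := by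
  induction N with
  | zero => interval_cases m; simp
  | succ N ih =>
    rcases Nat.lt_or_ge N m with h | h
    · have hmN : m = N + 1 := le_antisymm hm h
      subst hmN
      rw [Finset.sum_eq_zero]
      · simp
      · intro k hk
        rw [if_neg]
        simp only [mem_range] at hk
        omega
    · rw [sum_range_succ, ih h, if_pos h]
      push_cast; ring

private lemma key_identity (f : ℕ → ℝ) (N : ℕ) (hsum : ∑ i ∈ range N, f i = 0) :
    ∑ i ∈ range N, ∑ j ∈ range N, |(i:ℝ) - (j:ℝ)| * f i * f j
      = -2 * ∑ k ∈ range N, (∑ i ∈ range (k+1), f i)^2 := by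
  set E : ℕ → ℕ → ℝ := fun i k => if i ≤ k then 1 else 0 with hE
  have hEsum : ∀ i, i < N → ∑ k ∈ range N, E i k = (N : ℝ) - i := fun i hi =>
    sum_indicator_le N i hi.le
  have hEmul : ∀ i j k : ℕ, E i k * E j k = if max i j ≤ k then 1 else 0 := by
    intro i j k
    simp only [hE, max_le_iff]
    by_cases h1 : i ≤ k <;> by_cases h2 : j ≤ k <;> simp [h1, h2]
  have hEmulsum : ∀ i j, i < N → j < N →
      ∑ k ∈ range N, E i k * E j k = (N:ℝ) - (max i j : ℕ) := by
    intro i j hi hj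
    calc ∑ k ∈ range N, E i k * E j k
        = ∑ k ∈ range N, (if max i j ≤ k then (1:ℝ) else 0) :=
          sum_congr rfl fun k _ => hEmul i j k
      _ = (N:ℝ) - (max i j : ℕ) := sum_indicator_le N _ (max_lt hi hj).le
  have habs : ∀ i j, i < N → j < N →
      |(i:ℝ) - j| = ∑ k ∈ range N, (E i k + E j k - 2 * (E i k * E j k)) := by
    intro i j hi hj
    rw [Finset.sum_sub_distrib, Finset.sum_add_distrib, ← Finset.mul_sum,
      hEsum i hi, hEsum j hj, hEmulsum i j hi hj]
    rcases le_total i j with h | h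
    · have h' : (i:ℝ) ≤ j := by exact_mod_cast h
      rw [abs_of_nonpos (by linarith), max_eq_right h]
      ring
    · have h' : (j:ℝ) ≤ i := by exact_mod_cast h
      rw [abs_of_nonneg (by linarith), max_eq_left h]
      ring
  have swap : ∀ (g : ℕ → ℕ → ℕ → ℝ),
      ∑ i ∈ range N, ∑ j ∈ range N, ∑ k ∈ range N, g i j k
        = ∑ k ∈ range N, ∑ i ∈ range N, ∑ j ∈ range N, g i j k := by
    intro g
    calc ∑ i ∈ range N, ∑ j ∈ range N, ∑ k ∈ range N, g i j k
        = ∑ i ∈ range N, ∑ k ∈ range N, ∑ j ∈ range N, g i j k :=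
          sum_congr rfl fun i _ => Finset.sum_comm
      _ = ∑ k ∈ range N, ∑ i ∈ range N, ∑ j ∈ range N, g i j k := Finset.sum_comm
  calc ∑ i ∈ range N, ∑ j ∈ range N, |(i:ℝ) - (j:ℝ)| * f i * f j
      = ∑ i ∈ range N, ∑ j ∈ range N, ∑ k ∈ range N,
          (E i k + E j k - 2 * (E i k * E j k)) * (f i * f j) := by
        refine sum_congr rfl fun i hi => sum_congr rfl fun j hj => ?_
        rw [mul_assoc, habs i j (mem_range.mp hi) (mem_range.mp hj), Finset.sum_mul]
    _ = ∑ k ∈ range N, ∑ i ∈ range N, ∑ j ∈ range N,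
          (E i k + E j k - 2 * (E i k * E j k)) * (f i * f j) := swap _
    _ = ∑ k ∈ range N, -2 * (∑ i ∈ range N, E i k * f i)^2 := by
        refine sum_congr rfl fun k _ => ?_
        have expand : ∀ i j : ℕ, (E i k + E j k - 2 * (E i k * E j k)) * (f i * f j)
            = (E i k * f i) * f j + f i * (E j k * f j)
              + (-2) * ((E i k * f i) * (E j k * f j)) := fun i j => by ring
        have h1 : ∑ i ∈ range N, ∑ j ∈ range N, (E i k * f i) * f j = 0 := by
          refine Finset.sum_eq_zero fun i _ => ?_
          rw [← Finset.mul_sum, hsum, mul_zero]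
        have h2 : ∑ i ∈ range N, ∑ j ∈ range N, f i * (E j k * f j) = 0 := by
          rw [Finset.sum_comm]
          refine Finset.sum_eq_zero fun j _ => ?_
          rw [← Finset.sum_mul, hsum, zero_mul]
        have h3 : ∑ i ∈ range N, ∑ j ∈ range N,
            (-2) * ((E i k * f i) * (E j k * f j))
            = -2 * (∑ i ∈ range N, E i k * f i)^2 := by
          rw [pow_two, Finset.sum_mul_sum, Finset.mul_sum]
          exact sum_congr rfl fun i _ => by rw [Finset.mul_sum]
        simp_rw [expand, Finset.sum_add_distrib]
        rw [h1, h2, h3]; ring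
    _ = -2 * ∑ k ∈ range N, (∑ i ∈ range (k+1), f i)^2 := by
        rw [Finset.mul_sum]
        refine sum_congr rfl fun k hk => ?_
        have hk' : k + 1 ≤ N := mem_range.mp hk
        have : ∑ i ∈ range N, E i k * f i = ∑ i ∈ range (k+1), f i := by
          rw [← Finset.sum_subset (Finset.range_subset_range.mpr hk')
              (fun i _ hi => ?_)]
          · exact sum_congr rfl fun i hi => by
              rw [hE]; simp [Nat.lt_succ_iff.mp (mem_range.mp hi)]
          · simp only [mem_range, not_lt] at hi
            simp only [hE]
            rw [if_neg (by omega : ¬ i ≤ k), zero_mul]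
        rw [this]


private lemma sq_sum_bound (f : ℕ → ℝ) (N : ℕ) :
    ∑ k ∈ range N, (f k)^2 ≤ 4 * ∑ k ∈ range N, (∑ i ∈ range (k+1), f i)^2 := by
  set P : ℕ → ℝ := fun m => ∑ i ∈ range m, f i with hP
  have hf : ∀ k, f k = P (k+1) - P k := by
    intro k; simp only [hP, sum_range_succ]; ring
  have step : ∀ k, (f k)^2 ≤ 2 * (P (k+1))^2 + 2 * (P k)^2 := by
    intro k; rw [hf k]; nlinarith [sq_nonneg (P (k+1) + P k)]
  have h1 : ∑ k ∈ range N, (f k)^2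
      ≤ ∑ k ∈ range N, (2 * (P (k+1))^2 + 2 * (P k)^2) :=
    sum_le_sum fun k _ => step k
  have h2 : ∑ k ∈ range N, (P k)^2 ≤ ∑ k ∈ range N, (P (k+1))^2 := by
    cases N with
    | zero => simp
    | succ M =>
      rw [Finset.sum_range_succ' (fun k => (P k)^2) M]
      have hP0 : P 0 = 0 := by simp [hP]
      rw [hP0]
      simp only [ne_eq, OfNat.ofNat_ne_zero, not_false_eq_true, zero_pow, add_zero]
      exact Finset.sum_le_sum_of_subset_of_nonneg
        (Finset.range_subset_range.mpr (Nat.le_succ M)) (fun k _ _ => sq_nonneg _)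
  rw [Finset.sum_add_distrib, ← Finset.mul_sum, ← Finset.mul_sum] at h1
  linarith

private lemma double_ext (f : ℕ →₀ ℝ) {N : ℕ} (hsub : f.support ⊆ range N) :
    ∑ i ∈ f.support, ∑ j ∈ f.support, |(i:ℝ) - (j:ℝ)| * f i * f j
      = ∑ i ∈ range N, ∑ j ∈ range N, |(i:ℝ) - (j:ℝ)| * f i * f j := by
  have hz : ∀ i, i ∉ f.support → f i = 0 := fun i hi => Finsupp.notMem_support_iff.mp hi
  rw [show ∑ i ∈ f.support, ∑ j ∈ f.support, |(i:ℝ) - (j:ℝ)| * f i * f j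
      = ∑ i ∈ f.support, ∑ j ∈ range N, |(i:ℝ) - (j:ℝ)| * f i * f j from
    sum_congr rfl fun i _ => Finset.sum_subset hsub fun j _ hnj => by
      rw [hz j hnj, mul_zero]]
  exact Finset.sum_subset hsub fun i _ hni => Finset.sum_eq_zero fun j _ => by
    rw [hz i hni, mul_zero, zero_mul]

private lemma upper_bound (f : ℕ →₀ ℝ)
    (h0 : ∑ i ∈ f.support, f i = 0) (h1 : ∑ i ∈ f.support, (f i)^2 = 1) :
    ∑ i ∈ f.support, ∑ j ∈ f.support, |(i:ℝ) - (j:ℝ)| * f i * f j ≤ -1/2 := by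
  obtain ⟨N, hsub⟩ := f.support.exists_nat_subset_range
  have hz : ∀ i ∈ range N, i ∉ f.support → f i = 0 := fun i _ hi =>
    Finsupp.notMem_support_iff.mp hi
  have h0' : ∑ i ∈ range N, f i = 0 := by
    rw [← Finset.sum_subset hsub hz]; exact h0
  have h1' : ∑ i ∈ range N, (f i)^2 = 1 := by
    rw [← Finset.sum_subset hsub (fun i hi hni => by rw [hz i hi hni]; ring)]
    exact h1
  rw [double_ext f hsub, key_identity (⇑f) N h0']
  have hb : ∑ k ∈ range N, (f k)^2 ≤ 4 * ∑ k ∈ range N, (∑ i ∈ range (k+1), f i)^2 :=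
    sq_sum_bound (⇑f) N
  rw [h1'] at hb
  linarith


private lemma neg_one_pow_sq (k : ℕ) : ((-1:ℝ)^k)^2 = 1 := by
  rw [← pow_mul, mul_comm, pow_mul, neg_one_sq, one_pow]

private lemma witness (m : ℕ) :
    ∃ f : ℕ →₀ ℝ, (∑ i ∈ f.support, f i) = 0 ∧ (∑ i ∈ f.support, (f i)^2) = 1 ∧
      ∑ i ∈ f.support, ∑ j ∈ f.support, |(i:ℝ) - (j:ℝ)| * f i * f j
        = -2 * ((m:ℝ)+1) / (4*m+2) := by
  set c : ℝ := 4*(m:ℝ) + 2 with hc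
  have hcpos : 0 < c := by positivity
  set t : ℝ := Real.sqrt c⁻¹ with ht
  have ht2 : t^2 = c⁻¹ := Real.sq_sqrt (by positivity)
  set S : ℕ → ℝ := fun k => if 1 ≤ k ∧ k ≤ m + 1 then (-1)^(k-1) * t else 0 with hS
  set g : ℕ → ℝ := fun k => S (k+1) - S k with hg
  have hS0 : S 0 = 0 := by simp [hS]
  have hStop : ∀ k, m + 2 ≤ k → S k = 0 := by
    intro k hk; simp only [hS]; rw [if_neg (by omega)]
  have htel : ∀ q, ∑ k ∈ range q, g k = S q := by
    intro q
    simp only [hg]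
    rw [Finset.sum_range_sub S q, hS0, sub_zero]
  -- pointwise squares
  have hSsq : ∀ k, k ≤ m → (S (k+1))^2 = t^2 := by
    intro k hk
    simp only [hS]
    rw [if_pos (by omega : 1 ≤ k + 1 ∧ k + 1 ≤ m + 1)]
    rw [mul_pow, Nat.add_sub_cancel, neg_one_pow_sq, one_mul]
  have hg0 : g 0 = t := by
    simp only [hg, hS0, hS]
    rw [if_pos (by omega : 1 ≤ 1 ∧ 1 ≤ m + 1)]
    norm_num
  have hgtop : (g (m+1))^2 = t^2 := by
    simp only [hg]
    rw [hStop (m+2) le_rfl]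
    simp only [hS]
    rw [if_pos (by omega : 1 ≤ m + 1 ∧ m + 1 ≤ m + 1), Nat.add_sub_cancel]
    rw [zero_sub, neg_sq, mul_pow, neg_one_pow_sq, one_mul]
  have hgmid : ∀ k, k < m → (g (k+1))^2 = 4 * t^2 := by
    intro k hk
    simp only [hg, hS]
    rw [if_pos (by omega : 1 ≤ k + 1 + 1 ∧ k + 1 + 1 ≤ m + 1),
        if_pos (by omega : 1 ≤ k + 1 ∧ k + 1 ≤ m + 1)]
    simp only [Nat.add_sub_cancel]
    calc ((-1:ℝ)^(k+1) * t - (-1)^k * t)^2 = ((-1:ℝ)^k)^2 * (4 * t^2) := by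
          rw [pow_succ]; ring
      _ = 4 * t^2 := by rw [neg_one_pow_sq, one_mul]
  -- total sum zero
  have hsum0 : ∑ k ∈ range (m+2), g k = 0 := by
    rw [htel, hStop (m+2) le_rfl]
  -- sum of squares
  have hsumsq : ∑ k ∈ range (m+2), (g k)^2 = c * t^2 := by
    rw [sum_range_succ, Finset.sum_range_succ' (fun k => (g k)^2) m]
    rw [hg0, hgtop]
    rw [Finset.sum_congr rfl (fun k hk => hgmid k (mem_range.mp hk))]
    rw [Finset.sum_const, card_range, nsmul_eq_mul, hc]
    ring
  -- value
  have hval : ∑ i ∈ range (m+2), ∑ j ∈ range (m+2), |(i:ℝ) - (j:ℝ)| * g i * g j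
      = -2 * (((m:ℝ)+1) * t^2) := by
    rw [key_identity g (m+2) hsum0]
    have : ∀ k ∈ range (m+2), (∑ i ∈ range (k+1), g i)^2
        = if k ≤ m then t^2 else 0 := by
      intro k hk
      rw [htel]
      by_cases h : k ≤ m
      · rw [if_pos h, hSsq k h]
      · rw [if_neg h, hStop (k+1) (by omega), zero_pow (by norm_num)]
    rw [Finset.sum_congr rfl this, sum_range_succ, if_neg (by omega)]
    rw [Finset.sum_congr rfl (fun k hk => if_pos (by
        have := mem_range.mp hk; omega : k ≤ m))]
    rw [Finset.sum_const, card_range, nsmul_eq_mul]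
    push_cast; ring
  -- build the finsupp
  refine ⟨Finsupp.onFinset (range (m+2)) g (fun a ha => mem_range.mpr ?_), ?_, ?_, ?_⟩
  · by_contra h
    push_neg at h
    apply ha
    simp only [hg]
    rw [hStop a (by omega), hStop (a+1) (by omega), sub_zero]
  all_goals {
    set f : ℕ →₀ ℝ := Finsupp.onFinset (range (m+2)) g _ with hf
    have hsub : f.support ⊆ range (m+2) := Finsupp.support_onFinset_subset
    have hcoe : ∀ a, f a = g a := fun a => rfl
    have hz : ∀ i ∈ range (m+2), i ∉ f.support → f i = 0 := fun i _ hi =>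
      Finsupp.notMem_support_iff.mp hi
    first
    | · rw [Finset.sum_subset hsub hz]
        simp only [hcoe]
        exact hsum0
    | · rw [Finset.sum_subset hsub (fun i hi hni => by rw [hz i hi hni]; ring)]
        simp only [hcoe]
        rw [hsumsq, ht2]
        exact mul_inv_cancel₀ (ne_of_gt hcpos)
    | · rw [double_ext f hsub]
        simp only [hcoe]
        rw [hval, ht2, hc]
        field_simp
  }

end QECAux

/-- `QEC(ℕ) = -1/2`: for the infinite path graph on `ℕ` (distance `d(i,j) = |i-j|`),
`-1/2` is the least upper bound of `∑ᵢ∑ⱼ |i-j| f(i) f(j)` over finitely supported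
`f : ℕ → ℝ` with `∑ f = 0` and `∑ f² = 1`. -/
theorem qec_nat :
    IsLUB
      {y : ℝ | ∃ f : ℕ →₀ ℝ,
        (∑ i ∈ f.support, f i) = 0 ∧ (∑ i ∈ f.support, (f i) ^ 2) = 1 ∧
        y = ∑ i ∈ f.support, ∑ j ∈ f.support, |(i : ℝ) - (j : ℝ)| * f i * f j}
      (-1 / 2) := by
  constructor
  · rintro y ⟨f, h0, h1, rfl⟩
    exact upper_bound f h0 h1
  · intro b hb
    by_contra hlt
    push_neg at hlt
    obtain ⟨ε, hεpos, hbe⟩ : ∃ ε, 0 < ε ∧ b = -1/2 - ε :=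
      ⟨-1/2 - b, by linarith, by ring⟩
    obtain ⟨m, hm⟩ := exists_nat_gt (1/ε)
    obtain ⟨f, h0, h1, hv⟩ := witness m
    have hmem : -2 * ((m:ℝ)+1) / (4*m+2) ∈
        {y : ℝ | ∃ f : ℕ →₀ ℝ,
          (∑ i ∈ f.support, f i) = 0 ∧ (∑ i ∈ f.support, (f i) ^ 2) = 1 ∧
          y = ∑ i ∈ f.support, ∑ j ∈ f.support, |(i : ℝ) - (j : ℝ)| * f i * f j} :=
      ⟨f, h0, h1, hv.symm⟩
    have hle : -2 * ((m:ℝ)+1) / (4*m+2) ≤ b := hb hmem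
    have hmpos : (0:ℝ) ≤ m := Nat.cast_nonneg m
    have h1ε : 1 < ε * m := by
      rw [div_lt_iff₀ hεpos] at hm
      linarith [hm]
    rw [div_le_iff₀ (by positivity : (0:ℝ) < 4*(m:ℝ)+2)] at hle
    rw [hbe] at hle
    nlinarith [h1ε, hεpos, hmpos]
end

section
/- The number -1/2 is the least upper bound of the set of values ∑_{i∈ℤ} ∑_{j∈ℤ} |i-j|·f(i)·f(j), taken over all finitely supported functions f : ℤ → ℝ satisfying ∑_{i} f(i) = 0 and ∑_{i} f(i)² = 1. (That is, QEC(ℤ) = -1/2 for ℤ regarded as the two-sided infinite path graph with edges {i,i+1}.) -/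
open Finset


private noncomputable def chi (i k : ℤ) : ℝ := if i ≤ k then 1 else 0

private noncomputable def cume (f : ℤ →₀ ℝ) (k : ℤ) : ℝ := ∑ i ∈ f.support, f i * chi i k

lemma dist_eq_aux {N i j : ℤ} (hij : i ≤ j) (hi : -N ≤ i) (hj : j ≤ N) :
    ∑ k ∈ Ico (-N) N, (chi i k - chi j k) ^ 2 = |(i : ℝ) - (j : ℝ)| := by
  have h1 : ∀ k, (chi i k - chi j k) ^ 2 = if i ≤ k ∧ k < j then (1:ℝ) else 0 := by
    intro k
    unfold chi
    rcases le_or_gt i k with h | h <;> rcases le_or_gt j k with h' | h'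
    · simp [h, h', not_lt.mpr h']
    · simp [h, not_le.mpr h', h']
    · omega
    · simp [not_le.mpr h, not_le.mpr h']
  simp_rw [h1]
  rw [Finset.sum_boole]
  have h2 : (Ico (-N) N).filter (fun k => i ≤ k ∧ k < j) = Ico i j := by
    ext k; simp only [mem_filter, mem_Ico]; omega
  rw [h2, Int.card_Ico]
  have h3 : ((j - i).toNat : ℤ) = j - i := Int.toNat_of_nonneg (by omega)
  have h4 : ((j - i).toNat : ℝ) = (j : ℝ) - i := by
    exact_mod_cast congrArg (fun z : ℤ => (z : ℝ)) h3
  rw [h4, abs_sub_comm, abs_of_nonneg (by exact_mod_cast sub_nonneg.mpr hij)]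

lemma dist_eq {N i j : ℤ} (hi : -N ≤ i) (hi' : i ≤ N) (hj : -N ≤ j) (hj' : j ≤ N) :
    ∑ k ∈ Ico (-N) N, (chi i k - chi j k) ^ 2 = |(i : ℝ) - (j : ℝ)| := by
  rcases le_total i j with h | h
  · exact dist_eq_aux h hi hj'
  · rw [abs_sub_comm]
    rw [← dist_eq_aux h hj hi']
    apply Finset.sum_congr rfl
    intro k _; ring

lemma ident (f : ℤ →₀ ℝ) (N : ℤ)
    (hs : ∀ i ∈ f.support, -N ≤ i ∧ i ≤ N)
    (h0 : ∑ i ∈ f.support, f i = 0) :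
    ∑ i ∈ f.support, ∑ j ∈ f.support, |(i : ℝ) - (j : ℝ)| * f i * f j
      = -2 * ∑ k ∈ Ico (-N) N, (cume f k) ^ 2 := by
  have step1 : ∑ i ∈ f.support, ∑ j ∈ f.support, |(i : ℝ) - (j : ℝ)| * f i * f j
      = ∑ i ∈ f.support, ∑ j ∈ f.support, ∑ k ∈ Ico (-N) N,
          (chi i k - chi j k) ^ 2 * f i * f j := by
    apply Finset.sum_congr rfl; intro i hi
    apply Finset.sum_congr rfl; intro j hj
    rw [← dist_eq (hs i hi).1 (hs i hi).2 (hs j hj).1 (hs j hj).2, Finset.sum_mul,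
      Finset.sum_mul]
  have step2 : ∑ i ∈ f.support, ∑ j ∈ f.support, ∑ k ∈ Ico (-N) N,
          (chi i k - chi j k) ^ 2 * f i * f j
      = ∑ k ∈ Ico (-N) N, ∑ i ∈ f.support, ∑ j ∈ f.support,
          (chi i k - chi j k) ^ 2 * f i * f j := by
    rw [show (∑ i ∈ f.support, ∑ j ∈ f.support, ∑ k ∈ Ico (-N) N,
          (chi i k - chi j k) ^ 2 * f i * f j)
        = ∑ i ∈ f.support, ∑ k ∈ Ico (-N) N, ∑ j ∈ f.support,
          (chi i k - chi j k) ^ 2 * f i * f j from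
      Finset.sum_congr rfl fun i _ => Finset.sum_comm]
    exact Finset.sum_comm
  rw [step1, step2, Finset.mul_sum]
  apply Finset.sum_congr rfl
  intro k _
  have expand : ∀ i j : ℤ, (chi i k - chi j k) ^ 2 * f i * f j
      = (f i * chi i k) * f j + f i * (f j * chi j k)
        - 2 * ((f i * chi i k) * (f j * chi j k)) := by
    intro i j; unfold chi; split_ifs <;> ring
  simp_rw [expand]
  simp only [Finset.sum_sub_distrib, Finset.sum_add_distrib, ← Finset.mul_sum, ← Finset.sum_mul]
  rw [h0]
  rw [show cume f k = ∑ i ∈ f.support, f i * chi i k from rfl]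
  ring

lemma cume_diff (f : ℤ →₀ ℝ) (k : ℤ) : cume f k - cume f (k - 1) = f k := by
  unfold cume
  rw [← Finset.sum_sub_distrib]
  have h : ∀ i ∈ f.support, f i * chi i k - f i * chi i (k-1) = if i = k then f i else 0 := by
    intro i _; unfold chi; split_ifs <;> first | ring1 | (exfalso; omega)
  rw [Finset.sum_congr rfl h, Finset.sum_ite_eq' f.support k f]
  split_ifs with hk
  · rfl
  · exact (Finsupp.notMem_support_iff.mp hk).symm

lemma cume_top (f : ℤ →₀ ℝ) (N : ℤ) (hs : ∀ i ∈ f.support, i ≤ N)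
    (h0 : ∑ i ∈ f.support, f i = 0) : cume f N = 0 := by
  unfold cume
  rw [← h0]
  apply Finset.sum_congr rfl
  intro i hi
  unfold chi
  rw [if_pos (hs i hi), mul_one]

lemma cume_bot (f : ℤ →₀ ℝ) (M : ℤ) (hs : ∀ i ∈ f.support, ¬ i ≤ M) : cume f M = 0 := by
  unfold cume
  apply Finset.sum_eq_zero
  intro i hi
  unfold chi
  rw [if_neg (hs i hi), mul_zero]

lemma upper (f : ℤ →₀ ℝ) (N : ℤ) (hN : 0 ≤ N)
    (hs : ∀ i ∈ f.support, -N ≤ i ∧ i ≤ N)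
    (h0 : ∑ i ∈ f.support, f i = 0)
    (h1 : ∑ i ∈ f.support, (f i) ^ 2 = 1) :
    ∑ i ∈ f.support, ∑ j ∈ f.support, |(i : ℝ) - (j : ℝ)| * f i * f j ≤ -1 / 2 := by
  set T : ℝ := ∑ k ∈ Ico (-N) N, (cume f k) ^ 2 with hT
  have hsub : f.support ⊆ Icc (-N) N := by
    intro i hi; rw [mem_Icc]; exact hs i hi
  have hIcc1 : ∑ k ∈ Icc (-N) N, (f k) ^ 2 = 1 := by
    rw [← h1]
    exact (Finset.sum_subset hsub (fun x _ hx => by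
      rw [Finsupp.notMem_support_iff.mp hx]; ring)).symm
  have hA : ∑ k ∈ Icc (-N) N, (cume f k) ^ 2 = T + (cume f N) ^ 2 := by
    rw [← Finset.Ico_insert_right (by omega : -N ≤ N), Finset.sum_insert (by simp)]
    ring
  have hIcoIcc : Ico (-N) N = Icc (-N) (N - 1) := by
    ext k; simp only [mem_Ico, mem_Icc]; omega
  have hB : ∑ k ∈ Icc (-N) N, (cume f (k - 1)) ^ 2 = (cume f (-N - 1)) ^ 2 + T := by
    have himg : (Icc (-N) N).image (· - 1) = Icc (-N - 1) (N - 1) := by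
      ext k
      simp only [mem_image, mem_Icc]
      constructor
      · rintro ⟨a, ha, rfl⟩; omega
      · intro hk; exact ⟨k + 1, by omega, by ring⟩
    have hinj : ∀ x ∈ Icc (-N) N, ∀ y ∈ Icc (-N) N, x - 1 = y - 1 → x = y := by
      intro x _ y _ h; omega
    have := Finset.sum_image (g := fun k : ℤ => (k - 1)) (f := fun k : ℤ => (cume f k) ^ 2) hinj
    rw [← this, himg]
    rw [show Icc (-N - 1) (N - 1) = insert (-N - 1) (Icc (-N) (N - 1)) from by
      ext k; simp only [mem_insert, mem_Icc]; omega]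
    rw [Finset.sum_insert (by simp only [mem_Icc]; omega), hT, hIcoIcc]
  have hcN : cume f N = 0 := cume_top f N (fun i hi => (hs i hi).2) h0
  have hcB : cume f (-N - 1) = 0 := cume_bot f (-N - 1) (fun i hi => by
    have := (hs i hi).1; omega)
  have key : (1 : ℝ) ≤ 4 * T := by
    have step : ∑ k ∈ Icc (-N) N, (f k) ^ 2
        ≤ ∑ k ∈ Icc (-N) N, (2 * (cume f k) ^ 2 + 2 * (cume f (k - 1)) ^ 2) := by
      apply Finset.sum_le_sum
      intro k _
      rw [← cume_diff f k]
      nlinarith [sq_nonneg (cume f k + cume f (k - 1))]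
    rw [hIcc1] at step
    rw [Finset.sum_add_distrib, ← Finset.mul_sum, ← Finset.mul_sum, hA, hB, hcN, hcB] at step
    nlinarith
  rw [ident f N hs h0]
  linarith

lemma telescope (G : ℤ → ℝ) {a b : ℤ} (h : a ≤ b) :
    ∑ k ∈ Icc a b, (G k - G (k - 1)) = G b - G (a - 1) := by
  suffices H : ∀ d : ℕ, ∑ k ∈ Icc a (a + (d : ℤ)), (G k - G (k - 1)) = G (a + d) - G (a - 1) by
    obtain ⟨d, rfl⟩ : ∃ d : ℕ, b = a + (d : ℤ) := ⟨(b - a).toNat, by omega⟩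
    exact H d
  intro d
  induction d with
  | zero => simp
  | succ d ih =>
      have hcast : a + ((d + 1 : ℕ) : ℤ) = (a + d) + 1 := by push_cast; ring
      rw [hcast, show Icc a (a + (d : ℤ) + 1) = insert (a + (d : ℤ) + 1) (Icc a (a + d)) from by
          ext k; simp only [mem_insert, mem_Icc]; omega,
        Finset.sum_insert (by simp only [mem_Icc]; omega), ih]
      have h2 : a + (d : ℤ) + 1 - 1 = a + d := by ring
      rw [h2]; ring

lemma neg_one_zpow_sq (m : ℤ) : ((-1 : ℝ) ^ m) ^ 2 = 1 := by
  rcases Int.even_or_odd m with h | h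
  · rw [h.neg_one_zpow]; norm_num
  · rw [h.neg_one_zpow]; norm_num

lemma neg_one_zpow_sub_one (k : ℤ) : (-1 : ℝ) ^ (k - 1) = -((-1 : ℝ) ^ k) := by
  rw [zpow_sub_one₀ (by norm_num : (-1 : ℝ) ≠ 0)]
  norm_num

lemma mem_val (n : ℕ) (hn : 1 ≤ n) :
    ∃ f : ℤ →₀ ℝ, (∑ i ∈ f.support, f i) = 0 ∧ (∑ i ∈ f.support, (f i) ^ 2) = 1 ∧
      (-(n : ℝ) / (2 * n - 1))
        = ∑ i ∈ f.support, ∑ j ∈ f.support, |(i : ℝ) - (j : ℝ)| * f i * f j := by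
  have hn1 : (1 : ℤ) ≤ (n : ℤ) := by exact_mod_cast hn
  have hnR : (1 : ℝ) ≤ (n : ℝ) := by exact_mod_cast hn
  have hpos : (0 : ℝ) < 4 * (n : ℝ) - 2 := by linarith
  set G : ℤ → ℝ := fun k => if 1 ≤ k ∧ k ≤ (n : ℤ) then (-1 : ℝ) ^ k else 0 with hG
  set c : ℝ := (Real.sqrt (4 * (n : ℝ) - 2))⁻¹ with hc
  have hGzero : ∀ k : ℤ, ¬(1 ≤ k ∧ k ≤ (n : ℤ)) → G k = 0 := by
    intro k hk; simp only [hG, if_neg hk]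
  have hGval : ∀ k : ℤ, 1 ≤ k → k ≤ (n : ℤ) → G k = (-1 : ℝ) ^ k := by
    intro k h1 h2; simp only [hG, if_pos (And.intro h1 h2)]
  have hsupfun : ∀ k : ℤ, (fun k => c * (G k - G (k - 1))) k ≠ 0 → k ∈ Icc 1 ((n : ℤ) + 1) := by
    intro k hk
    rw [mem_Icc]
    by_contra hc'
    apply hk
    show c * (G k - G (k - 1)) = 0
    rw [hGzero k (by omega), hGzero (k - 1) (by omega)]
    ring
  set f : ℤ →₀ ℝ := Finsupp.onFinset _ _ hsupfun with hf
  have hfapp : ∀ k, f k = c * (G k - G (k - 1)) := fun k => rfl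
  have hsupp : f.support ⊆ Icc 1 ((n : ℤ) + 1) := Finsupp.support_onFinset_subset
  have hext : ∀ φ : ℤ → ℝ, (∀ k, f k = 0 → φ k = 0) →
      ∑ i ∈ f.support, φ i = ∑ i ∈ Icc 1 ((n : ℤ) + 1), φ i := fun φ hφ =>
    Finset.sum_subset hsupp (fun x _ hx => hφ x (Finsupp.notMem_support_iff.mp hx))
  -- sum zero
  have h0 : ∑ i ∈ f.support, f i = 0 := by
    rw [hext (fun k => f k) (fun k hk => hk)]
    calc ∑ i ∈ Icc 1 ((n : ℤ) + 1), f i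
        = c * ∑ k ∈ Icc 1 ((n : ℤ) + 1), (G k - G (k - 1)) := by
          rw [Finset.mul_sum]; exact Finset.sum_congr rfl fun k _ => hfapp k
      _ = 0 := by
          rw [telescope G (by omega : (1 : ℤ) ≤ (n : ℤ) + 1)]
          rw [hGzero ((n : ℤ) + 1) (by omega), hGzero (1 - 1) (by omega)]
          ring
  -- sum of squares
  have hc2 : c ^ 2 = (4 * (n : ℝ) - 2)⁻¹ := by
    rw [hc, inv_pow, Real.sq_sqrt hpos.le]
  have hmid : ∀ k : ℤ, 2 ≤ k → k ≤ (n : ℤ) → (G k - G (k - 1)) ^ 2 = 4 := by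
    intro k h2 h3
    rw [hGval k (by omega) h3, hGval (k - 1) (by omega) (by omega), neg_one_zpow_sub_one]
    linear_combination (4 : ℝ) * neg_one_zpow_sq k
  have hIccsplit : Icc (1 : ℤ) ((n : ℤ) + 1)
      = insert 1 (insert ((n : ℤ) + 1) (Icc 2 (n : ℤ))) := by
    ext k; simp only [mem_insert, mem_Icc]; omega
  have hcard : (Icc (2 : ℤ) (n : ℤ)).card = n - 1 := by
    rw [Int.card_Icc]
    omega
  have hS : ∑ k ∈ Icc (1 : ℤ) ((n : ℤ) + 1), (G k - G (k - 1)) ^ 2 = 4 * (n : ℝ) - 2 := by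
    rw [hIccsplit, Finset.sum_insert (by simp only [mem_insert, mem_Icc]; omega),
      Finset.sum_insert (by simp only [mem_Icc]; omega)]
    have e1 : (G 1 - G (1 - 1)) ^ 2 = 1 := by
      rw [hGval 1 le_rfl hn1, hGzero (1 - 1) (by omega)]
      norm_num
    have e2 : (G ((n : ℤ) + 1) - G ((n : ℤ) + 1 - 1)) ^ 2 = 1 := by
      rw [hGzero ((n : ℤ) + 1) (by omega),
        show (n : ℤ) + 1 - 1 = (n : ℤ) from by ring, hGval (n : ℤ) hn1 le_rfl]
      linear_combination neg_one_zpow_sq (n : ℤ)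
    have e3 : ∑ k ∈ Icc (2 : ℤ) (n : ℤ), (G k - G (k - 1)) ^ 2 = 4 * ((n : ℝ) - 1) := by
      have hconst : ∀ k ∈ Icc (2 : ℤ) (n : ℤ), (G k - G (k - 1)) ^ 2 = (4 : ℝ) := by
        intro k hk; rw [mem_Icc] at hk; exact hmid k hk.1 hk.2
      rw [Finset.sum_congr rfl hconst]
      rw [Finset.sum_const, hcard, nsmul_eq_mul]
      have : ((n - 1 : ℕ) : ℝ) = (n : ℝ) - 1 := by
        push_cast [Nat.cast_sub hn]; ring
      rw [this]; ring
    rw [e1, e2, e3]; ring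
  have h1 : ∑ i ∈ f.support, (f i) ^ 2 = 1 := by
    rw [hext (fun k => f k ^ 2) (fun k hk => by show f k ^ 2 = 0; rw [hk]; ring)]
    calc ∑ k ∈ Icc 1 ((n : ℤ) + 1), f k ^ 2
        = c ^ 2 * ∑ k ∈ Icc 1 ((n : ℤ) + 1), (G k - G (k - 1)) ^ 2 := by
          rw [Finset.mul_sum]
          exact Finset.sum_congr rfl fun k _ => by rw [hfapp k]; ring
      _ = 1 := by
          rw [hS, hc2, inv_mul_cancel₀ (ne_of_gt hpos)]
  -- the value
  have hbound : ∀ i ∈ f.support, -((n : ℤ) + 1) ≤ i ∧ i ≤ (n : ℤ) + 1 := by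
    intro i hi
    have := hsupp hi
    rw [mem_Icc] at this
    omega
  have hcume : ∀ k ∈ Ico (-((n : ℤ) + 1)) ((n : ℤ) + 1), cume f k = c * G k := by
    intro k hk
    rw [mem_Ico] at hk
    unfold cume
    rw [Finset.sum_subset hsupp (fun x _ hx => by
      rw [Finsupp.notMem_support_iff.mp hx]; ring)]
    have hchi : ∀ i : ℤ, f i * chi i k = if i ≤ k then f i else 0 := by
      intro i; unfold chi; split_ifs <;> ring
    rw [Finset.sum_congr rfl fun i _ => hchi i, ← Finset.sum_filter]
    rcases le_or_gt 1 k with h1k | h1k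
    · have hfil : (Icc (1 : ℤ) ((n : ℤ) + 1)).filter (· ≤ k) = Icc 1 k := by
        ext i; simp only [mem_filter, mem_Icc]; omega
      rw [hfil]
      calc ∑ i ∈ Icc (1 : ℤ) k, f i
          = c * ∑ i ∈ Icc (1 : ℤ) k, (G i - G (i - 1)) := by
            rw [Finset.mul_sum]; exact Finset.sum_congr rfl fun i _ => hfapp i
        _ = c * G k := by
            rw [telescope G h1k, hGzero (1 - 1) (by omega)]; ring
    · have hfil : (Icc (1 : ℤ) ((n : ℤ) + 1)).filter (· ≤ k) = ∅ := by
        ext i; simp only [mem_filter, mem_Icc, notMem_empty, iff_false]; omega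
      rw [hfil, Finset.sum_empty, hGzero k (by omega)]
      ring
  have hQsum : ∑ k ∈ Ico (-((n : ℤ) + 1)) ((n : ℤ) + 1), (cume f k) ^ 2
      = c ^ 2 * (n : ℝ) := by
    have hcsq : ∀ k ∈ Ico (-((n : ℤ) + 1)) ((n : ℤ) + 1), (cume f k) ^ 2 = (c * G k) ^ 2 := by
      intro k hk; rw [hcume k hk]
    rw [Finset.sum_congr rfl hcsq]
    have hGsq : ∀ k ∈ Icc (1 : ℤ) (n : ℤ), (c * G k) ^ 2 = c ^ 2 := by
      intro k hk
      rw [mem_Icc] at hk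
      rw [hGval k hk.1 hk.2]
      have := neg_one_zpow_sq k
      nlinarith [this]
    rw [← Finset.sum_subset (show Icc (1 : ℤ) (n : ℤ) ⊆ Ico (-((n : ℤ) + 1)) ((n : ℤ) + 1)
        from fun x hx => by rw [mem_Icc] at hx; rw [mem_Ico]; omega)
      (fun x hx hx' => by
        rw [mem_Ico] at hx; rw [mem_Icc] at hx'
        rw [hGzero x (by omega)]; ring)]
    rw [Finset.sum_congr rfl hGsq, Finset.sum_const, Int.card_Icc, nsmul_eq_mul]
    have : (((n : ℤ) + 1 - 1).toNat : ℝ) = (n : ℝ) := by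
      norm_num
    rw [this, mul_comm]
  refine ⟨f, h0, h1, ?_⟩
  rw [ident f ((n : ℤ) + 1) hbound h0, hQsum, hc2]
  have h2n : (2 * (n : ℝ) - 1) ≠ 0 := by linarith
  rw [show (4 * (n : ℝ) - 2) = 2 * (2 * n - 1) by ring]
  field_simp

/-- `QEC(ℤ) = -1/2`: for the two-sided infinite path graph on `ℤ`
(distance `d(i,j) = |i-j|`), `-1/2` is the least upper bound of
`∑ᵢ∑ⱼ |i-j| f(i) f(j)` over finitely supported `f : ℤ → ℝ` with
`∑ f = 0` and `∑ f² = 1`. -/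
theorem qec_int :
    IsLUB
      {y : ℝ | ∃ f : ℤ →₀ ℝ,
        (∑ i ∈ f.support, f i) = 0 ∧ (∑ i ∈ f.support, (f i) ^ 2) = 1 ∧
        y = ∑ i ∈ f.support, ∑ j ∈ f.support, |(i : ℝ) - (j : ℝ)| * f i * f j}
      (-1 / 2) := by
  constructor
  · rintro y ⟨f, h0, h1, rfl⟩
    set N : ℤ := ((f.support.sup fun i => i.natAbs : ℕ) : ℤ) with hNdef
    have hN : (0 : ℤ) ≤ N := Int.natCast_nonneg _
    have hs : ∀ i ∈ f.support, -N ≤ i ∧ i ≤ N := by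
      intro i hi
      have h := Finset.le_sup (f := fun i : ℤ => i.natAbs) hi
      have h2 : (i.natAbs : ℤ) ≤ N := Int.ofNat_le.mpr h
      omega
    exact upper f N hN hs h0 h1
  · intro b hb
    by_contra hlt
    push_neg at hlt
    have hε : (0 : ℝ) < -1 / 2 - b := by linarith
    obtain ⟨m, hm⟩ := exists_nat_gt (1 / (-1 / 2 - b))
    have hmem := mem_val (m + 1) (by omega)
    have hble : -((m + 1 : ℕ) : ℝ) / (2 * ((m + 1 : ℕ) : ℝ) - 1) ≤ b := hb hmem
    set x : ℝ := ((m + 1 : ℕ) : ℝ) with hxdef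
    have hx : x = (m : ℝ) + 1 := by rw [hxdef]; push_cast; ring
    have hx1 : (1 : ℝ) ≤ x := by
      have : (0 : ℝ) ≤ (m : ℝ) := Nat.cast_nonneg m
      rw [hx]; linarith
    have h2x : (0 : ℝ) < 2 * x - 1 := by linarith
    have hA : -x ≤ b * (2 * x - 1) := by
      rw [div_le_iff₀ h2x] at hble
      exact hble
    have hB : (1 : ℝ) < (m : ℝ) * (-1 / 2 - b) := by
      rw [div_lt_iff₀ hε] at hm
      linarith
    nlinarith [mul_pos hε h2x]
end

section
/- Let a, b, t ∈ ℝ and let (S_n)_{n≥0} be defined by S_0 = 1, S_1 = a·t + b, and S_n = (1+2t)·S_{n-1} − t²·S_{n-2} for n ≥ 2. Then for every n ≥ 1, S_n = (a·t + b)·∑_{k=0}^{n-1} C(2n−k−1, k)·t^k − ∑_{k=0}^{n-2} C(2n−k−3, k)·t^{k+2}, where C(m,k) denotes the binomial coefficient. -/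
/-- The sequence `Sₙ(a,b;t)`: `S₀ = 1`, `S₁ = a·t + b`,
`Sₙ = (1+2t)·Sₙ₋₁ − t²·Sₙ₋₂`. -/
def S (a b t : ℝ) : ℕ → ℝ
  | 0 => 1
  | 1 => a * t + b
  | n + 2 => (1 + 2 * t) * S a b t (n + 1) - t ^ 2 * S a b t n

noncomputable def g (t : ℝ) (m : ℕ) : ℝ :=
  ∑ k ∈ Finset.range (m+1), (Nat.choose (m-k) k : ℝ) * t ^ k

lemma grec (t : ℝ) (m : ℕ) : g t (m+2) = g t (m+1) + t * g t m := by
  unfold g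
  rw [Finset.sum_range_succ' (fun k => (Nat.choose (m+2-k) k : ℝ) * t ^ k) (m+2)]
  have key : ∀ k ∈ Finset.range (m+2),
      ((Nat.choose (m+2-(k+1)) (k+1) : ℝ)) * t ^ (k+1)
        = (Nat.choose (m-k) k : ℝ) * t ^ (k+1)
          + (Nat.choose (m-k) (k+1) : ℝ) * t ^ (k+1) := by
    intro k hk
    have h : Nat.choose (m+2-(k+1)) (k+1) = Nat.choose (m-k) k + Nat.choose (m-k) (k+1) := by
      rcases Nat.lt_or_ge k (m+1) with h | h
      · have h1 : m+2-(k+1) = (m-k)+1 := by omega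
        rw [h1, Nat.choose_succ_succ]
      · have hk' : k = m+1 := by
          simp only [Finset.mem_range] at hk; omega
        subst hk'
        have e1 : m + 2 - (m+1+1) = 0 := by omega
        have e2 : m - (m+1) = 0 := by omega
        rw [e1, e2]
        simp [Nat.choose_eq_zero_of_lt]
    rw [h]; push_cast; ring
  rw [Finset.sum_congr rfl key, Finset.sum_add_distrib]
  have h1 : ∑ k ∈ Finset.range (m+2), (Nat.choose (m-k) k : ℝ) * t ^ (k+1)
      = t * ∑ k ∈ Finset.range (m+1), (Nat.choose (m-k) k : ℝ) * t ^ k := by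
    rw [Finset.sum_range_succ]
    have e : m - (m+1) = 0 := by omega
    rw [e]
    rw [Nat.choose_eq_zero_of_lt (by omega)]
    rw [Finset.mul_sum]
    simp [pow_succ]
    apply Finset.sum_congr rfl
    intro k _
    ring
  have h2 : (∑ k ∈ Finset.range (m+2), (Nat.choose (m-k) (k+1) : ℝ) * t ^ (k+1))
        + (Nat.choose (m+2-0) 0 : ℝ) * t ^ 0
      = ∑ k ∈ Finset.range (m+2), (Nat.choose (m+1-k) k : ℝ) * t ^ k := by
    rw [Finset.sum_range_succ' (fun k => (Nat.choose (m+1-k) k : ℝ) * t ^ k) (m+1)]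
    rw [Finset.sum_range_succ]
    have e1 : m - (m+1) = 0 := by omega
    rw [e1, Nat.choose_eq_zero_of_lt (by omega)]
    simp only [Nat.cast_zero, zero_mul, add_zero, Nat.sub_zero, Nat.choose_zero_right,
      Nat.cast_one, one_mul, pow_zero]
    congr 1
    apply Finset.sum_congr rfl
    intro k _
    have e : m+1-(k+1) = m-k := by omega
    rw [e]
  calc (∑ k ∈ Finset.range (m+2), (Nat.choose (m-k) k : ℝ) * t ^ (k+1))
        + (∑ k ∈ Finset.range (m+2), (Nat.choose (m-k) (k+1) : ℝ) * t ^ (k+1))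
        + (Nat.choose (m+2-0) 0 : ℝ) * t ^ 0
      = ((∑ k ∈ Finset.range (m+2), (Nat.choose (m-k) (k+1) : ℝ) * t ^ (k+1))
          + (Nat.choose (m+2-0) 0 : ℝ) * t ^ 0)
        + (∑ k ∈ Finset.range (m+2), (Nat.choose (m-k) k : ℝ) * t ^ (k+1)) := by ring
    _ = _ := by rw [h1, h2]

lemma g_zero (t : ℝ) : g t 0 = 1 := by simp [g]

lemma g_one (t : ℝ) : g t 1 = 1 := by
  simp [g, Finset.sum_range_succ]

noncomputable def F (t : ℝ) : ℕ → ℝ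
  | 0 => 0
  | n+1 => g t (2*n+1)

lemma F_one (t : ℝ) : F t 1 = 1 := by
  show g t 1 = 1
  exact g_one t

lemma F_rec (t : ℝ) (n : ℕ) : F t (n+2) = (1 + 2*t) * F t (n+1) - t^2 * F t n := by
  cases n with
  | zero =>
    show g t 3 = (1+2*t) * g t 1 - t^2 * 0
    have h1 := grec t 1
    have h2 := grec t 0
    rw [g_zero, g_one] at *
    linear_combination h1 + h2
  | succ n =>
    show g t (2*(n+2)+1) = (1+2*t) * g t (2*(n+1)+1) - t^2 * g t (2*n+1)
    have e : 2*(n+2)+1 = (2*n+3)+2 := by ring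
    have e2 : 2*(n+1)+1 = 2*n+3 := by ring
    rw [e, e2]
    have h1 := grec t (2*n+3)
    have h2 := grec t (2*n+2)
    have h3 := grec t (2*n+1)
    have e3 : 2*n+3+2 = 2*n+5 := by ring
    have e4 : 2*n+3+1 = 2*n+4 := by ring
    have e5 : 2*n+2+2 = 2*n+4 := by ring
    have e6 : 2*n+2+1 = 2*n+3 := by ring
    have e7 : 2*n+1+2 = 2*n+3 := by ring
    have e8 : 2*n+1+1 = 2*n+2 := by ring
    rw [e3, e4] at h1
    rw [e5, e6] at h2
    rw [e7, e8] at h3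
    rw [e3]
    linear_combination h1 + h2 - t * h3

lemma main_lemma (a b t : ℝ) (n : ℕ) :
    S a b t (n+1) = (a*t+b) * F t (n+1) - t^2 * F t n := by
  induction n using Nat.twoStepInduction with
  | zero =>
    show a * t + b = (a*t+b) * F t 1 - t^2 * F t 0
    rw [F_one]
    show a * t + b = (a*t+b) * 1 - t^2 * 0
    ring
  | one =>
    have hF2 : F t 2 = 1 + 2*t := by
      have := F_rec t 0
      rw [F_one] at this
      rw [this]
      show (1+2*t)*1 - t^2 * 0 = 1 + 2*t
      ring
    show (1 + 2*t) * S a b t 1 - t^2 * S a b t 0 = (a*t+b) * F t 2 - t^2 * F t 1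
    rw [hF2, F_one]
    show (1 + 2*t) * (a*t+b) - t^2 * 1 = (a*t+b) * (1+2*t) - t^2 * 1
    ring
  | more n ih1 ih2 =>
    show (1 + 2*t) * S a b t (n+2) - t^2 * S a b t (n+1)
        = (a*t+b) * F t (n+3) - t^2 * F t (n+2)
    rw [ih1, ih2, F_rec t (n+1), F_rec t n]
    ring

lemma g_eq_partial (t : ℝ) (m : ℕ) :
    g t (2*m+1) = ∑ k ∈ Finset.range (m+1), (Nat.choose (2*m+1-k) k : ℝ) * t ^ k := by
  unfold g
  rw [show 2*m+1+1 = 2*m+2 from rfl]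
  symm
  apply Finset.sum_subset
  · intro k hk
    simp only [Finset.mem_range] at *
    omega
  · intro k hk1 hk2
    simp only [Finset.mem_range] at *
    rw [Nat.choose_eq_zero_of_lt (by omega)]
    simp

/-- For `n ≥ 1`,
`Sₙ(a,b;t) = (a·t+b)·∑_{k=0}^{n-1} C(2n−k−1,k) tᵏ − ∑_{k=0}^{n-2} C(2n−k−3,k) t^{k+2}`. -/
theorem S_explicit_formula (a b t : ℝ) (n : ℕ) (hn : 1 ≤ n) :
    S a b t n =
      (a * t + b) * ∑ k ∈ Finset.range n, (Nat.choose (2 * n - k - 1) k : ℝ) * t ^ k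
        - ∑ k ∈ Finset.range (n - 1), (Nat.choose (2 * n - k - 3) k : ℝ) * t ^ (k + 2) := by
  obtain ⟨m, rfl⟩ : ∃ m, n = m + 1 := ⟨n - 1, by omega⟩
  have hs1 : ∑ k ∈ Finset.range (m+1), (Nat.choose (2*(m+1) - k - 1) k : ℝ) * t ^ k
      = F t (m+1) := by
    show _ = g t (2*m+1)
    rw [g_eq_partial]
    apply Finset.sum_congr rfl
    intro k hk
    have e : 2*(m+1) - k - 1 = 2*m+1-k := by omega
    rw [e]
  have hs2 : ∑ k ∈ Finset.range (m+1-1), (Nat.choose (2*(m+1) - k - 3) k : ℝ) * t ^ (k+2)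
      = t^2 * F t m := by
    cases m with
    | zero => simp [F]
    | succ j =>
      show ∑ k ∈ Finset.range (j+1+1-1), (Nat.choose (2*(j+1+1) - k - 3) k : ℝ) * t ^ (k+2)
          = t^2 * g t (2*j+1)
      rw [g_eq_partial, Finset.mul_sum]
      apply Finset.sum_congr (by norm_num)
      intro k hk
      simp only [Finset.mem_range] at hk
      have e : 2*(j+1+1) - k - 3 = 2*j+1-k := by omega
      rw [e]
      ring
  rw [hs1, hs2]
  exact main_lemma a b t m
end

section
/- For t ∈ ℝ and n ≥ 0 define W_n(t) := ∑_{k=0}^{n} C(2n−k+1, k)·t^k. Then for every n ≥ 0 and every real t: W_n(t) = S_n(2,1;t) and W_n(t) = S_n(1, t+1; t), where S_n(a,b;t) is defined by the recurrence S_0(a,b;t) = 1, S_1(a,b;t) = a·t + b, S_n(a,b;t) = (1+2t)·S_{n-1}(a,b;t) − t²·S_{n-2}(a,b;t). (In the second equality the parameter b is set equal to t+1 for the same value of t at which the sequence is evaluated.) -/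
/-- `Wₙ(t) := ∑_{k=0}^{n} C(2n−k+1, k)·tᵏ`. -/
def W (t : ℝ) (n : ℕ) : ℝ :=
  ∑ k ∈ Finset.range (n + 1), (Nat.choose (2 * n - k + 1) k : ℝ) * t ^ k

/-- Auxiliary: `Vₙ(t) := ∑_{k=0}^{n} C(2n−k, k)·tᵏ`. -/
def V (t : ℝ) (n : ℕ) : ℝ :=
  ∑ k ∈ Finset.range (n + 1), (Nat.choose (2 * n - k) k : ℝ) * t ^ k

lemma W_succ (t : ℝ) (n : ℕ) : W t (n + 1) = V t (n + 1) + t * W t n := by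
  have h1 : W t (n + 1) =
      1 + ∑ j ∈ Finset.range (n + 1),
        (Nat.choose (2 * n + 2 - j) (j + 1) : ℝ) * t ^ (j + 1) := by
    rw [W, Finset.sum_range_succ']
    have : ∀ j ∈ Finset.range (n + 1),
        (Nat.choose (2 * (n + 1) - (j + 1) + 1) (j + 1) : ℝ) * t ^ (j + 1)
        = (Nat.choose (2 * n + 2 - j) (j + 1) : ℝ) * t ^ (j + 1) := by
      intro j hj
      simp only [Finset.mem_range] at hj
      have h : 2 * (n + 1) - (j + 1) + 1 = 2 * n + 2 - j := by omega
      rw [h]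
    rw [Finset.sum_congr rfl this]
    norm_num [add_comm]
  have h2 : V t (n + 1) =
      1 + ∑ j ∈ Finset.range (n + 1),
        (Nat.choose (2 * n + 1 - j) (j + 1) : ℝ) * t ^ (j + 1) := by
    rw [V, Finset.sum_range_succ']
    have : ∀ j ∈ Finset.range (n + 1),
        (Nat.choose (2 * (n + 1) - (j + 1)) (j + 1) : ℝ) * t ^ (j + 1)
        = (Nat.choose (2 * n + 1 - j) (j + 1) : ℝ) * t ^ (j + 1) := by
      intro j hj
      simp only [Finset.mem_range] at hj
      have h : 2 * (n + 1) - (j + 1) = 2 * n + 1 - j := by omega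
      rw [h]
    rw [Finset.sum_congr rfl this]
    norm_num [add_comm]
  have h3 : t * W t n = ∑ j ∈ Finset.range (n + 1),
      (Nat.choose (2 * n + 1 - j) j : ℝ) * t ^ (j + 1) := by
    rw [W, Finset.mul_sum]
    refine Finset.sum_congr rfl fun j hj => ?_
    have : 2 * n - j + 1 = 2 * n + 1 - j := by
      simp at hj; omega
    rw [this]; ring
  rw [h1, h2, h3, add_assoc, ← Finset.sum_add_distrib]
  congr 1
  refine Finset.sum_congr rfl fun j hj => ?_
  simp at hj
  have hp : (2 * n + 2 - j) = (2 * n + 1 - j) + 1 := by omega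
  rw [hp, Nat.choose_succ_succ' (2 * n + 1 - j) j]
  push_cast
  ring

lemma V_succ (t : ℝ) (n : ℕ) : V t (n + 1) = W t n + t * V t n := by
  have h2 : V t (n + 1) =
      1 + ∑ j ∈ Finset.range (n + 1),
        (Nat.choose (2 * n + 1 - j) (j + 1) : ℝ) * t ^ (j + 1) := by
    rw [V, Finset.sum_range_succ']
    have : ∀ j ∈ Finset.range (n + 1),
        (Nat.choose (2 * (n + 1) - (j + 1)) (j + 1) : ℝ) * t ^ (j + 1)
        = (Nat.choose (2 * n + 1 - j) (j + 1) : ℝ) * t ^ (j + 1) := by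
      intro j hj
      simp only [Finset.mem_range] at hj
      have h : 2 * (n + 1) - (j + 1) = 2 * n + 1 - j := by omega
      rw [h]
    rw [Finset.sum_congr rfl this]
    norm_num [add_comm]
  have h1 : W t n =
      1 + ∑ j ∈ Finset.range (n + 1),
        (Nat.choose (2 * n - j) (j + 1) : ℝ) * t ^ (j + 1) := by
    rw [W, Finset.sum_range_succ']
    have : ∀ j ∈ Finset.range n,
        (Nat.choose (2 * n - (j + 1) + 1) (j + 1) : ℝ) * t ^ (j + 1)
        = (Nat.choose (2 * n - j) (j + 1) : ℝ) * t ^ (j + 1) := by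
      intro j hj
      simp only [Finset.mem_range] at hj
      have h : 2 * n - (j + 1) + 1 = 2 * n - j := by omega
      rw [h]
    rw [Finset.sum_congr rfl this, Finset.sum_range_succ]
    have : (Nat.choose (2 * n - n) (n + 1) : ℝ) = 0 := by
      rw [Nat.choose_eq_zero_of_lt (by omega)]; norm_num
    rw [this]
    norm_num [add_comm]
  have h3 : t * V t n = ∑ j ∈ Finset.range (n + 1),
      (Nat.choose (2 * n - j) j : ℝ) * t ^ (j + 1) := by
    rw [V, Finset.mul_sum]
    refine Finset.sum_congr rfl fun j hj => ?_
    ring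
  rw [h1, h2, h3, add_assoc, ← Finset.sum_add_distrib]
  congr 1
  refine Finset.sum_congr rfl fun j hj => ?_
  simp at hj
  have hp : (2 * n + 1 - j) = (2 * n - j) + 1 := by omega
  rw [hp, Nat.choose_succ_succ' (2 * n - j) j]
  push_cast
  ring

lemma W_rec (t : ℝ) (n : ℕ) :
    W t (n + 2) = (1 + 2 * t) * W t (n + 1) - t ^ 2 * W t n := by
  have hV : V t (n + 1) = W t (n + 1) - t * W t n := by
    rw [W_succ]; ring
  rw [W_succ t (n + 1), V_succ t (n + 1), hV]
  ring

lemma W_eq_S21 (t : ℝ) : ∀ n, W t n = S 2 1 t n := by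
  intro n
  induction n using Nat.twoStepInduction with
  | zero => simp [W, S]
  | one =>
    rw [W, S]
    rw [Finset.sum_range_succ, Finset.sum_range_one]
    norm_num
    ring
  | more n ih1 ih2 =>
    rw [W_rec, S, ih1, ih2]

lemma S_eq (t : ℝ) : ∀ n, S 2 1 t n = S 1 (t + 1) t n := by
  intro n
  induction n using Nat.twoStepInduction with
  | zero => rfl
  | one => show 2 * t + 1 = 1 * t + (t + 1); ring
  | more n ih1 ih2 => rw [S, S, ih1, ih2]

/-- `Wₙ(t) = Sₙ(2,1;t) = Sₙ(1,t+1;t)`. -/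
theorem W_eq_S (t : ℝ) (n : ℕ) :
    W t n = S 2 1 t n ∧ W t n = S 1 (t + 1) t n := by
  refine ⟨W_eq_S21 t n, ?_⟩
  rw [W_eq_S21 t n, S_eq]
end

section
/- For every integer n ≥ 1 and every real t, (1/(n+1))·S_n(2,1;t) = ∏_{k=1}^{n} ( t + 1/(2 + 2·cos(kπ/(n+1))) ), where S_n(2,1;t) is defined by the recurrence S_0 = 1, S_1 = 2t + 1, S_m = (1+2t)·S_{m-1} − t²·S_{m-2}. -/
open Real

noncomputable def zet (n : ℕ) : ℂ := Complex.exp (2 * Real.pi * Complex.I / ((2*n+2 : ℕ) : ℂ))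

lemma zet_prim (n : ℕ) : IsPrimitiveRoot (zet n) (2*n+2) :=
  Complex.isPrimitiveRoot_exp _ (by omega)

lemma hn1 (n : ℕ) : ((n:ℂ) + 1) ≠ 0 := by
  have : ((n+1:ℕ):ℂ) ≠ 0 := Nat.cast_ne_zero.mpr (by omega)
  push_cast at this; exact this

lemma zet_pow (n k : ℕ) :
    (zet n) ^ k = Complex.exp ((((k:ℝ) * Real.pi / ((n:ℝ)+1)) : ℂ) * Complex.I) := by
  rw [zet, ← Complex.exp_nat_mul]
  congr 1
  have h2 : ((2*n+2:ℕ):ℂ) = 2*((n:ℂ)+1) := by push_cast; ring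
  rw [h2]
  have := hn1 n
  push_cast
  field_simp

lemma zet_pow_rev (n k : ℕ) (hk : k ≤ 2*n+2) :
    (zet n) ^ (2*n+2-k) = Complex.exp (-(((k:ℝ) * Real.pi / ((n:ℝ)+1)) : ℂ) * Complex.I) := by
  rw [zet_pow]
  have harg : ((((2*n+2-k:ℕ):ℝ) * Real.pi / ((n:ℝ)+1)) : ℂ) * Complex.I
      = 2*(Real.pi:ℂ)*Complex.I + (-(((k:ℝ) * Real.pi / ((n:ℝ)+1)) : ℂ)) * Complex.I := by
    have := hn1 n
    push_cast [Nat.cast_sub hk]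
    field_simp
    ring
  rw [harg, Complex.exp_add, Complex.exp_two_pi_mul_I, one_mul]

lemma zet_pair_mul (n k : ℕ) (hk : k ≤ 2*n+2) :
    (zet n) ^ k * (zet n) ^ (2*n+2-k) = 1 := by
  rw [← pow_add]
  have : k + (2*n+2-k) = 2*n+2 := by omega
  rw [this]
  exact (zet_prim n).pow_eq_one

lemma zet_pair_add (n k : ℕ) (hk : k ≤ 2*n+2) :
    (zet n) ^ k + (zet n) ^ (2*n+2-k)
      = 2 * ((Real.cos ((k:ℝ) * Real.pi / ((n:ℝ)+1)) : ℝ) : ℂ) := by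
  rw [zet_pow, zet_pow_rev n k hk, Complex.ofReal_cos, ← Complex.two_cos]
  push_cast
  ring_nf

open Polynomial in
lemma prod_X_sub_zeta (m : ℕ) (hm : m ≠ 0) {ζ : ℂ} (hζ : IsPrimitiveRoot ζ m) :
    ∏ k ∈ Finset.range m, (X - C (ζ ^ k)) = X ^ m - 1 := by
  have hroots : (X ^ m - C (1:ℂ)).roots = (Multiset.range m).map (fun k => ζ ^ k) := by
    have := hζ.nthRoots_eq (α := 1) (a := (1:ℂ)) (one_pow m)
    simpa [Polynomial.nthRoots] using this
  have hmonic : (X ^ m - C (1:ℂ)).Monic := monic_X_pow_sub_C 1 hm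
  have hcard : (X ^ m - C (1:ℂ)).roots.card = (X ^ m - C (1:ℂ)).natDegree := by
    rw [hroots, Multiset.card_map, Multiset.card_range, natDegree_X_pow_sub_C]
  have h := prod_multiset_X_sub_C_of_monic_of_roots_card_eq hmonic hcard
  rw [hroots, Multiset.map_map] at h
  have : ∏ k ∈ Finset.range m, (X - C (ζ ^ k))
      = ((Multiset.range m).map ((fun a => X - C a) ∘ fun k => ζ ^ k)).prod := rfl
  rw [this, h, map_one]


lemma prod_pairs {M : Type*} [CommMonoid M] (n : ℕ) (f : ℕ → M) :
    ∏ k ∈ ((Finset.range (2*n+2)).erase (n+1)).erase 0, f k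
      = ∏ k ∈ Finset.Icc 1 n, (f k * f (2*n+2-k)) := by
  have hsplit : ((Finset.range (2*n+2)).erase (n+1)).erase 0
      = Finset.Icc 1 n ∪ Finset.Icc (n+2) (2*n+1) := by
    ext k
    simp only [Finset.mem_erase, Finset.mem_range, Finset.mem_union, Finset.mem_Icc]
    omega
  have hdisj : Disjoint (Finset.Icc 1 n) (Finset.Icc (n+2) (2*n+1)) := by
    rw [Finset.disjoint_left]
    intro k hk hk'
    simp only [Finset.mem_Icc] at hk hk'
    omega
  rw [hsplit, Finset.prod_union hdisj, Finset.prod_mul_distrib]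
  congr 1
  refine Finset.prod_nbij' (fun k => 2*n+2-k) (fun k => 2*n+2-k) ?_ ?_ ?_ ?_ ?_ <;>
    intro a ha <;> simp only [Finset.mem_Icc] at * <;> try omega
  congr 1
  omega

open Polynomial in
lemma poly_key (n : ℕ) {ζ : ℂ} (hζ : IsPrimitiveRoot ζ (2*n+2)) :
    ∏ k ∈ ((Finset.range (2*n+2)).erase (n+1)).erase 0, (X - C (ζ ^ k))
      = ∑ j ∈ Finset.range (n+1), ((X:ℂ[X]) ^ 2) ^ j := by
  have hm1 : ζ ^ (n+1) = -1 := by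
    have hsq : (ζ ^ (n+1) - 1) * (ζ ^ (n+1) + 1) = 0 := by
      have : ζ ^ (2*n+2) = 1 := hζ.pow_eq_one
      linear_combination this
    rcases mul_eq_zero.mp hsq with h | h
    · exact absurd (sub_eq_zero.mp h) (hζ.pow_ne_one_of_pos_of_lt (by omega) (by omega))
    · exact eq_neg_of_add_eq_zero_left h
  have h0mem : (0:ℕ) ∈ (Finset.range (2*n+2)).erase (n+1) := by
    simp only [Finset.mem_erase, Finset.mem_range]; omega
  have h1mem : (n+1) ∈ Finset.range (2*n+2) := by
    simp only [Finset.mem_range]; omega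
  have e1 := Finset.mul_prod_erase _ (fun k => (X:ℂ[X]) - C (ζ ^ k)) h0mem
  have e2 := Finset.mul_prod_erase _ (fun k => (X:ℂ[X]) - C (ζ ^ k)) h1mem
  have hfull := prod_X_sub_zeta (2*n+2) (by omega) hζ
  rw [← e2, ← e1] at hfull
  have hgeom : (∑ j ∈ Finset.range (n+1), ((X:ℂ[X]) ^ 2) ^ j) * ((X:ℂ[X])^2 - 1)
      = ((X:ℂ[X])^2)^(n+1) - 1 := geom_sum_mul _ _
  have hne : ((X:ℂ[X])^2 - 1) ≠ 0 := by
    intro hcon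
    have := congrArg (Polynomial.eval (0:ℂ)) hcon
    simp at this
  apply mul_right_cancel₀ hne
  rw [hgeom, ← pow_mul]
  calc (∏ k ∈ ((Finset.range (2*n+2)).erase (n+1)).erase 0, ((X:ℂ[X]) - C (ζ ^ k)))
        * ((X:ℂ[X])^2 - 1)
      = (X - C (ζ ^ (n+1))) * ((X - C (ζ ^ 0)) *
          ∏ k ∈ ((Finset.range (2*n+2)).erase (n+1)).erase 0, ((X:ℂ[X]) - C (ζ ^ k))) := by
        simp only [hm1, pow_zero, map_one, map_neg]; ring
    _ = X ^ (2*n+2) - 1 := hfull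
    _ = (X:ℂ[X]) ^ (2*(n+1)) - 1 := by ring_nf

lemma eval_prod_pairs (n : ℕ) (w : ℂ) :
    ∏ k ∈ Finset.Icc 1 n, ((w - (zet n)^k) * (w - (zet n)^(2*n+2-k)))
      = ∑ j ∈ Finset.range (n+1), (w^2)^j := by
  have hp := poly_key n (zet_prim n)
  have h := congrArg (Polynomial.eval w) hp
  rw [Polynomial.eval_prod] at h
  simp only [Polynomial.eval_sub, Polynomial.eval_X, Polynomial.eval_C,
    Polynomial.eval_finset_sum, Polynomial.eval_pow] at h
  rw [prod_pairs n (fun k => w - (zet n)^k)] at h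
  exact h

lemma prodC (n : ℕ) :
    ∏ k ∈ Finset.Icc 1 n, (2 + 2*Real.cos ((k:ℝ)*Real.pi/((n:ℝ)+1))) = (n:ℝ)+1 := by
  have h := eval_prod_pairs n (-1)
  have hcongr : ∀ k ∈ Finset.Icc 1 n, ((-1:ℂ) - (zet n)^k) * ((-1:ℂ) - (zet n)^(2*n+2-k))
      = (((2 + 2*Real.cos ((k:ℝ)*Real.pi/((n:ℝ)+1)) : ℝ)) : ℂ) := by
    intro k hk
    simp only [Finset.mem_Icc] at hk
    have hm := zet_pair_mul n k (by omega)
    have ha := zet_pair_add n k (by omega)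
    push_cast at ha ⊢
    linear_combination hm + ha
  rw [Finset.prod_congr rfl hcongr] at h
  have hsum : ∑ j ∈ Finset.range (n+1), (((-1:ℂ))^2)^j = (n:ℂ)+1 := by
    simp
  rw [hsum, ← Complex.ofReal_prod] at h
  exact_mod_cast h

lemma S_zero : ∀ n, S 2 1 0 n = 1
  | 0 => by simp [S]
  | 1 => by norm_num [S]
  | (n+2) => by
      rw [show S 2 1 0 (n+2) = (1 + 2*0) * S 2 1 0 (n+1) - 0^2 * S 2 1 0 n from rfl,
        S_zero (n+1), S_zero n]
      norm_num

lemma S_quarter : ∀ n, S 2 1 (-(1/4)) n = ((n:ℝ)+1)/4^n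
  | 0 => by simp [S]
  | 1 => by norm_num [S]
  | (n+2) => by
      rw [show S 2 1 (-(1/4)) (n+2)
          = (1 + 2*(-(1/4))) * S 2 1 (-(1/4)) (n+1) - (-(1/4))^2 * S 2 1 (-(1/4)) n from rfl,
        S_quarter (n+1), S_quarter n]
      push_cast
      field_simp
      ring

lemma refl_prod (n : ℕ) (f : ℝ → ℝ) :
    ∏ k ∈ Finset.Icc 1 n, f (Real.cos ((k:ℝ)*Real.pi/((n:ℝ)+1)))
      = ∏ k ∈ Finset.Icc 1 n, f (-Real.cos ((k:ℝ)*Real.pi/((n:ℝ)+1))) := by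
  refine Finset.prod_nbij' (fun k => n+1-k) (fun k => n+1-k) ?_ ?_ ?_ ?_ ?_ <;>
    intro a ha <;> simp only [Finset.mem_Icc] at * <;> try omega
  congr 1
  have hc : ((n+1-a : ℕ):ℝ) = (n:ℝ)+1-(a:ℝ) := by
    push_cast [Nat.cast_sub (show a ≤ n+1 by omega)]; ring
  rw [hc]
  have harg : ((n:ℝ)+1-(a:ℝ))*Real.pi/((n:ℝ)+1) = Real.pi - (a:ℝ)*Real.pi/((n:ℝ)+1) := by
    have hne : ((n:ℝ)+1) ≠ 0 := by positivity
    field_simp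
  rw [harg, Real.cos_pi_sub, neg_neg]

lemma key (n : ℕ) (t : ℝ) :
    S 2 1 t n = ∏ k ∈ Finset.Icc 1 n,
      (1 + 2*t - 2*t*Real.cos ((k:ℝ)*Real.pi/((n:ℝ)+1))) := by
  by_cases ht0 : t = 0
  · subst ht0
    rw [S_zero]
    symm
    apply Finset.prod_eq_one
    intro k hk
    ring
  by_cases ht4 : t = -(1/4)
  · subst ht4
    rw [S_quarter]
    have hcongr : ∀ k ∈ Finset.Icc 1 n,
        (1 + 2*(-(1/4)) - 2*(-(1/4))*Real.cos ((k:ℝ)*Real.pi/((n:ℝ)+1)))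
          = (2 + 2*Real.cos ((k:ℝ)*Real.pi/((n:ℝ)+1)))/4 := by
      intro k hk; ring
    rw [Finset.prod_congr rfl hcongr, Finset.prod_div_distrib, Finset.prod_const, prodC,
      Nat.card_Icc]
    simp
  -- generic case
  have ht4' : (1:ℝ) + 4*t ≠ 0 := by intro h; apply ht4; linarith
  have htc : (t:ℂ) ≠ 0 := Complex.ofReal_ne_zero.mpr ht0
  obtain ⟨D, hD⟩ := IsAlgClosed.exists_pow_nat_eq (1+4*(t:ℂ)) (n := 2) (by norm_num)
  obtain ⟨w, hw_def⟩ : ∃ w : ℂ, w = ((1+2*(t:ℂ)) + D)/(2*(t:ℂ)) := ⟨_, rfl⟩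
  have hquad : (t:ℂ)*w^2 + (t:ℂ) = (1+2*(t:ℂ))*w := by
    rw [hw_def]
    field_simp
    linear_combination hD
  have hw0 : w ≠ 0 := by
    intro h
    rw [h] at hquad
    simp at hquad
    tauto
  have hw1 : w^2 ≠ 1 := by
    intro h
    have h2 : 2*(t:ℂ) = (1+2*(t:ℂ))*w := by
      rw [h] at hquad; linear_combination hquad
    have h4 : (1:ℂ)+4*(t:ℂ) = 0 := by
      linear_combination (-(2*(t:ℂ)) - (1+2*(t:ℂ))*w)*h2 - (1+2*(t:ℂ))^2*h
    apply ht4'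
    exact_mod_cast h4
  have claim1 : ∀ m : ℕ, ((S 2 1 t m : ℝ) : ℂ) * w^m
      = (t:ℂ)^m * ∑ j ∈ Finset.range (m+1), (w^2)^j := by
    intro m
    induction m using Nat.strong_induction_on with
    | _ m ih =>
      match m with
      | 0 => simp [S]
      | 1 =>
        rw [show S 2 1 t 1 = 2*t+1 from rfl]
        rw [Finset.sum_range_succ, Finset.sum_range_succ]
        push_cast
        linear_combination -hquad
      | (m+2) =>
        have h1 := ih (m+1) (by omega)
        have h2 := ih m (by omega)
        have hB : ∑ j ∈ Finset.range (m+2), (w^2)^j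
            = (∑ j ∈ Finset.range (m+1), (w^2)^j) + (w^2)^(m+1) := Finset.sum_range_succ _ _
        have hC : ∑ j ∈ Finset.range (m+3), (w^2)^j
            = (∑ j ∈ Finset.range (m+2), (w^2)^j) + (w^2)^(m+2) := Finset.sum_range_succ _ _
        rw [show S 2 1 t (m+2) = (1+2*t) * S 2 1 t (m+1) - t^2 * S 2 1 t m from rfl]
        push_cast
        linear_combination (1+2*(t:ℂ))*w*h1 - (t:ℂ)^2*w^2*h2
          - ((t:ℂ)^(m+1) * (∑ j ∈ Finset.range (m+2), (w^2)^j))*hquad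
          + ((t:ℂ)^(m+2) * w^2)*hB - (t:ℂ)^(m+2)*hC
  have hfac : ∀ k ∈ Finset.Icc 1 n,
      (((1 + 2*t - 2*t*Real.cos ((k:ℝ)*Real.pi/((n:ℝ)+1)) : ℝ)) : ℂ) * w
        = (t:ℂ) * ((w - (zet n)^k) * (w - (zet n)^(2*n+2-k))) := by
    intro k hk
    simp only [Finset.mem_Icc] at hk
    have hm := zet_pair_mul n k (by omega)
    have ha := zet_pair_add n k (by omega)
    push_cast at ha ⊢
    linear_combination -hquad + ((t:ℂ)*w)*ha - (t:ℂ)*hm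
  have hbig : ((∏ k ∈ Finset.Icc 1 n,
        (1 + 2*t - 2*t*Real.cos ((k:ℝ)*Real.pi/((n:ℝ)+1))) : ℝ) : ℂ) * w^n
      = (t:ℂ)^n * ∑ j ∈ Finset.range (n+1), (w^2)^j := by
    rw [Complex.ofReal_prod]
    have hcard : (Finset.Icc 1 n).card = n := by rw [Nat.card_Icc]; omega
    have hstep : (∏ k ∈ Finset.Icc 1 n,
          (((1 + 2*t - 2*t*Real.cos ((k:ℝ)*Real.pi/((n:ℝ)+1)) : ℝ)) : ℂ)) * w^n
        = ∏ k ∈ Finset.Icc 1 n,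
          ((((1 + 2*t - 2*t*Real.cos ((k:ℝ)*Real.pi/((n:ℝ)+1)) : ℝ)) : ℂ) * w) := by
      rw [Finset.prod_mul_distrib, Finset.prod_const, hcard]
    rw [hstep, Finset.prod_congr rfl hfac, Finset.prod_mul_distrib, Finset.prod_const, hcard,
      eval_prod_pairs]
  have hfin := (claim1 n).trans hbig.symm
  have hcancel := mul_right_cancel₀ (pow_ne_zero n hw0) hfin
  exact_mod_cast hcancel

/-- `(1/(n+1))·Sₙ(2,1;t) = ∏_{k=1}^{n} (t + 1/(2 + 2 cos(kπ/(n+1))))`. -/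
theorem S_two_one_roots (n : ℕ) (hn : 1 ≤ n) (t : ℝ) :
    (1 / (n + 1 : ℝ)) * S 2 1 t n =
      ∏ k ∈ Finset.Icc 1 n, (t + 1 / (2 + 2 * Real.cos ((k : ℝ) * π / (n + 1)))) := by
  have hd : ∀ k ∈ Finset.Icc 1 n, 0 < 2 + 2 * Real.cos ((k:ℝ) * π / ((n:ℝ) + 1)) := by
    intro k hk
    simp only [Finset.mem_Icc] at hk
    have hpos : (0:ℝ) < (n:ℝ) + 1 := by positivity
    have hθ0 : 0 ≤ (k:ℝ) * π / ((n:ℝ) + 1) := by positivity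
    have hlt : (k:ℝ) * π / ((n:ℝ) + 1) < π := by
      rw [div_lt_iff₀ hpos]
      have hkn : (k:ℝ) < (n:ℝ) + 1 := by exact_mod_cast Nat.lt_succ_of_le hk.2
      nlinarith [Real.pi_pos]
    have hcos := Real.strictAntiOn_cos ⟨hθ0, hlt.le⟩ ⟨by positivity, le_refl π⟩ hlt
    rw [Real.cos_pi] at hcos
    linarith
  have hfac : ∀ k ∈ Finset.Icc 1 n,
      t + 1 / (2 + 2 * Real.cos ((k:ℝ) * π / ((n:ℝ) + 1)))
        = (1 + 2*t + 2*t*Real.cos ((k:ℝ) * π / ((n:ℝ) + 1)))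
            / (2 + 2 * Real.cos ((k:ℝ) * π / ((n:ℝ) + 1))) := by
    intro k hk
    have := hd k hk
    rw [eq_div_iff this.ne', add_mul, one_div_mul_cancel this.ne']
    ring
  rw [Finset.prod_congr rfl hfac, Finset.prod_div_distrib, prodC]
  have hswap : ∏ k ∈ Finset.Icc 1 n, (1 + 2*t + 2*t*Real.cos ((k:ℝ) * π / ((n:ℝ) + 1)))
      = ∏ k ∈ Finset.Icc 1 n, (1 + 2*t - 2*t*Real.cos ((k:ℝ) * π / ((n:ℝ) + 1))) := by
    rw [refl_prod n (fun c => 1 + 2*t + 2*t*c)]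
    exact Finset.prod_congr rfl (fun k hk => by ring)
  rw [hswap, ← key n t]
  ring
end

section
/- For every integer n ≥ 1 and every real t, S_n(1, 1/2; t) = ∏_{k=1}^{n} ( t + 1/(2 + 2·cos((2k−1)π/(2n))) ), where S_n(1,1/2;t) is defined by the recurrence S_0 = 1, S_1 = t + 1/2, S_m = (1+2t)·S_{m-1} − t²·S_{m-2}. -/
open Real

/-- Polynomial version of `S 1 (1/2)`. -/
noncomputable def Sp : ℕ → Polynomial ℝ
  | 0 => 1
  | 1 => Polynomial.X + Polynomial.C (1 / 2)
  | n + 2 => (1 + 2 * Polynomial.X) * Sp (n + 1) - Polynomial.X ^ 2 * Sp n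

lemma Sp_eval : ∀ (n : ℕ) (t : ℝ), (Sp n).eval t = S 1 (1 / 2) t n
  | 0, t => by simp [Sp, S]
  | 1, t => by simp [Sp, S]
  | n + 2, t => by
      simp only [Sp, S, Polynomial.eval_sub, Polynomial.eval_mul, Polynomial.eval_add,
        Polynomial.eval_one, Polynomial.eval_ofNat, Polynomial.eval_pow, Polynomial.eval_X,
        Polynomial.eval_mul, Sp_eval (n + 1), Sp_eval n]

lemma Sp_monic_deg : ∀ n : ℕ, (Sp n).Monic ∧ (Sp n).natDegree = n
  | 0 => by simp [Sp, Polynomial.monic_one]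
  | 1 => by
      constructor
      · exact Polynomial.monic_X_add_C _
      · simp [Sp]
  | n + 2 => by
      obtain ⟨h1m, h1d⟩ := Sp_monic_deg (n + 1)
      obtain ⟨h0m, h0d⟩ := Sp_monic_deg n
      have hdeg : (Sp (n + 2)).natDegree ≤ n + 2 := by
        rw [Sp]
        refine le_trans (Polynomial.natDegree_sub_le _ _) ?_
        apply max_le
        · refine le_trans (Polynomial.natDegree_mul_le) ?_
          have : (1 + 2 * Polynomial.X : Polynomial ℝ).natDegree ≤ 1 := by
            compute_degree
          omega
        · refine le_trans (Polynomial.natDegree_mul_le) ?_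
          simp only [h0d, Polynomial.natDegree_X_pow]
          omega
      have hcoeff : (Sp (n + 2)).coeff (n + 2) = 1 := by
        rw [Sp]
        rw [Polynomial.coeff_sub, add_mul, one_mul, mul_assoc,
          Polynomial.coeff_add]
        have hXp : (Polynomial.X * Sp (n + 1)).coeff (n + 2) = (Sp (n + 1)).coeff (n + 1) := by
          rw [Polynomial.coeff_X_mul]
        have c1 : (Sp (n + 1)).coeff (n + 2) = 0 := by
          apply Polynomial.coeff_eq_zero_of_natDegree_lt; omega
        have c2 : (Sp (n + 1)).coeff (n + 1) = 1 := by
          have := h1m; rw [Polynomial.Monic, Polynomial.leadingCoeff, h1d] at this; exact this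
        have c3 : (Sp n).coeff n = 1 := by
          have := h0m; rw [Polynomial.Monic, Polynomial.leadingCoeff, h0d] at this; exact this
        rw [c1, Polynomial.coeff_ofNat_mul, hXp, c2, Polynomial.coeff_X_pow_mul, c3]
        norm_num
      have hm : (Sp (n + 2)).Monic :=
        Polynomial.monic_of_natDegree_le_of_coeff_eq_one _ hdeg hcoeff
      refine ⟨hm, le_antisymm hdeg ?_⟩
      exact Polynomial.le_natDegree_of_ne_zero (by rw [hcoeff]; norm_num)

/-- Trig evaluation: for `t = -1/(4 cos²φ)`, `Sₙ(t) = cos(2nφ)/(4cos²φ)ⁿ`. -/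
lemma Sp_eval_trig : ∀ (n : ℕ) (φ : ℝ), Real.cos φ ≠ 0 →
    (Sp n).eval (-(1 / (4 * Real.cos φ ^ 2))) =
      Real.cos (2 * n * φ) / (4 * Real.cos φ ^ 2) ^ n
  | 0, φ, h => by simp [Sp]
  | 1, φ, h => by
      have hc : Real.cos φ ^ 2 ≠ 0 := pow_ne_zero _ h
      simp only [Sp, Polynomial.eval_add, Polynomial.eval_X, Polynomial.eval_C, pow_one,
        Nat.cast_one]
      rw [show (2 : ℝ) * 1 * φ = 2 * φ by ring, Real.cos_two_mul]
      field_simp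
      ring
  | n + 2, φ, h => by
      have hc : (4 : ℝ) * Real.cos φ ^ 2 ≠ 0 := by positivity
      have key : Real.cos (2 * (n + 2 : ℕ) * φ)
          = 2 * Real.cos (2 * φ) * Real.cos (2 * (n + 1 : ℕ) * φ) - Real.cos (2 * n * φ) := by
        have h1 := Real.cos_add (2 * (n + 1 : ℕ) * φ) (2 * φ)
        have h2 := Real.cos_sub (2 * (n + 1 : ℕ) * φ) (2 * φ)
        have e1 : 2 * (n + 1 : ℕ) * φ + 2 * φ = 2 * (n + 2 : ℕ) * φ := by push_cast; ring
        have e2 : 2 * (n + 1 : ℕ) * φ - 2 * φ = 2 * n * φ := by push_cast; ring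
        rw [e1] at h1; rw [e2] at h2
        linarith
      have hcos2 : Real.cos (2 * φ) = 2 * Real.cos φ ^ 2 - 1 := Real.cos_two_mul φ
      simp only [Sp, Polynomial.eval_sub, Polynomial.eval_mul, Polynomial.eval_add,
        Polynomial.eval_one, Polynomial.eval_ofNat, Polynomial.eval_pow, Polynomial.eval_X,
        Sp_eval_trig (n + 1) φ h, Sp_eval_trig n φ h, key, hcos2]
      field_simp
      ring

/-- `Sₙ(1,1/2;t) = ∏_{k=1}^{n} (t + 1/(2 + 2 cos((2k−1)π/(2n))))`. -/
theorem S_one_half_roots (n : ℕ) (hn : 1 ≤ n) (t : ℝ) :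
    S 1 (1 / 2) t n =
      ∏ k ∈ Finset.Icc 1 n,
        (t + 1 / (2 + 2 * Real.cos ((2 * (k : ℝ) - 1) * π / (2 * n)))) := by
  -- the angles and roots
  set ψ : ℕ → ℝ := fun k => (2 * (k : ℝ) - 1) * π / (4 * n) with hψ
  have hnpos : (0 : ℝ) < n := by exact_mod_cast hn
  have hψmem : ∀ k ∈ Finset.Icc 1 n, 0 < ψ k ∧ ψ k < π / 2 := by
    intro k hk
    rw [Finset.mem_Icc] at hk
    constructor
    · apply div_pos
      · apply mul_pos _ Real.pi_pos
        have : (1 : ℝ) ≤ (k : ℝ) := by exact_mod_cast hk.1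
        linarith
      · linarith
    · rw [div_lt_iff₀ (by linarith)]
      have : (k : ℝ) ≤ n := by exact_mod_cast hk.2
      have := Real.pi_pos
      nlinarith
  have hψcos : ∀ k ∈ Finset.Icc 1 n, 0 < Real.cos (ψ k) := by
    intro k hk
    obtain ⟨h1, h2⟩ := hψmem k hk
    exact Real.cos_pos_of_mem_Ioo ⟨by linarith [Real.pi_pos], h2⟩
  -- root values
  set r : ℕ → ℝ := fun k => -(1 / (4 * Real.cos (ψ k) ^ 2)) with hr
  -- the denominator in the statement equals 4 cos² ψ
  have hden : ∀ k : ℕ, 2 + 2 * Real.cos ((2 * (k : ℝ) - 1) * π / (2 * n))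
      = 4 * Real.cos (ψ k) ^ 2 := by
    intro k
    have harg : (2 * (k : ℝ) - 1) * π / (2 * n) = 2 * ψ k := by
      rw [hψ]; field_simp; ring
    rw [harg, Real.cos_two_mul]; ring
  -- each r k is a root of Sp n
  have hroot : ∀ k ∈ Finset.Icc 1 n, (Sp n).eval (r k) = 0 := by
    intro k hk
    have hc := (hψcos k hk).ne'
    rw [hr]
    rw [Sp_eval_trig n (ψ k) hc]
    have : Real.cos (2 * n * ψ k) = 0 := by
      have : 2 * (n : ℝ) * ψ k = (2 * (k : ℝ) - 1) * π / 2 := by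
        rw [hψ]; field_simp; ring
      rw [this, Real.cos_eq_zero_iff]
      refine ⟨(k : ℤ) - 1, ?_⟩
      push_cast
      ring
    rw [this, zero_div]
  -- r is injective on Icc 1 n
  have hinj : ∀ j ∈ Finset.Icc 1 n, ∀ k ∈ Finset.Icc 1 n, r j = r k → j = k := by
    intro j hj k hk hrjk
    have hcj := hψcos j hj
    have hck := hψcos k hk
    have h4j : (0:ℝ) < 4 * Real.cos (ψ j) ^ 2 := by positivity
    have h4k : (0:ℝ) < 4 * Real.cos (ψ k) ^ 2 := by positivity
    have hsq : Real.cos (ψ j) ^ 2 = Real.cos (ψ k) ^ 2 := by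
      rw [hr] at hrjk
      simp only [neg_inj] at hrjk
      rw [div_eq_div_iff h4j.ne' h4k.ne'] at hrjk
      linarith
    have hcoseq : Real.cos (ψ j) = Real.cos (ψ k) := by
      nlinarith [hcj, hck]
    have hψeq : ψ j = ψ k := by
      have hjm := hψmem j hj
      have hkm := hψmem k hk
      have := Real.pi_pos
      exact Real.injOn_cos ⟨le_of_lt hjm.1, by linarith [hjm.2]⟩
        ⟨le_of_lt hkm.1, by linarith [hkm.2]⟩ hcoseq
    -- from ψ j = ψ k conclude j = k
    rw [hψ] at hψeq
    have h4n : (4 : ℝ) * n ≠ 0 := by positivity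
    have h2 := congrArg (fun x => x * (4 * (n : ℝ))) hψeq
    simp only [div_mul_cancel₀ _ h4n] at h2
    have h3 := mul_right_cancel₀ Real.pi_ne_zero h2
    have : (j : ℝ) = (k : ℝ) := by linarith
    exact_mod_cast this
  -- multiset of roots
  set m : Multiset ℝ := (Finset.Icc 1 n).val.map r with hm
  have hmcard : Multiset.card m = n := by
    rw [hm, Multiset.card_map]
    simp [Nat.card_Icc]
  have hmnodup : m.Nodup := Multiset.Nodup.map_on hinj (Finset.Icc 1 n).nodup
  obtain ⟨hmonic, hdeg⟩ := Sp_monic_deg n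
  have hSpne : Sp n ≠ 0 := hmonic.ne_zero
  have hsub : m ≤ (Sp n).roots := by
    rw [Multiset.le_iff_subset hmnodup]
    intro x hx
    rw [hm, Multiset.mem_map] at hx
    obtain ⟨k, hk, rfl⟩ := hx
    rw [Polynomial.mem_roots hSpne]
    exact hroot k hk
  have hroots : (Sp n).roots = m := by
    refine (Multiset.eq_of_le_of_card_le hsub ?_).symm
    rw [hmcard]
    calc Multiset.card (Sp n).roots ≤ (Sp n).natDegree := Polynomial.card_roots' _
      _ = n := hdeg
  have hfact : (Multiset.map (fun a => Polynomial.X - Polynomial.C a) (Sp n).roots).prod = Sp n :=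
    Polynomial.prod_multiset_X_sub_C_of_monic_of_roots_card_eq hmonic (by rw [hroots, hmcard, hdeg])
  -- finish by evaluating
  rw [← Sp_eval n t, ← hfact, hroots, hm, Multiset.map_map]
  simp only [Function.comp_def]
  rw [← Finset.prod_eq_multiset_prod, Polynomial.eval_prod]
  apply Finset.prod_congr rfl
  intro k hk
  simp only [Polynomial.eval_sub, Polynomial.eval_X, Polynomial.eval_C, hr, hden k]
  ring
end

section
/- For every integer n ≥ 1 and every real t, S_n(1,1;t) = ∏_{k=1}^{n} ( t + 1/(2 + 2·cos(2kπ/(2n+1))) ), where S_n(1,1;t) is defined by the recurrence S_0 = 1, S_1 = t + 1, S_m = (1+2t)·S_{m-1} − t²·S_{m-2}. -/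
open Real

open Polynomial

lemma key_s10 (θ : ℝ) (hc : Real.cos θ ≠ 0) :
    ∀ n : ℕ, S 1 1 (-1 / (4 * Real.cos θ ^ 2)) n *
      (Real.sin θ * (4 * Real.cos θ ^ 2) ^ n) = Real.sin ((2 * n + 1) * θ) := by
  have h4 : (4 : ℝ) * Real.cos θ ^ 2 ≠ 0 := by positivity
  have key2 : ∀ n : ℕ,
      (S 1 1 (-1 / (4 * Real.cos θ ^ 2)) n *
        (Real.sin θ * (4 * Real.cos θ ^ 2) ^ n) = Real.sin ((2 * (n:ℝ) + 1) * θ)) ∧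
      (S 1 1 (-1 / (4 * Real.cos θ ^ 2)) (n+1) *
        (Real.sin θ * (4 * Real.cos θ ^ 2) ^ (n+1)) = Real.sin ((2 * (n:ℝ) + 3) * θ)) := by
    intro n
    induction n with
    | zero =>
      constructor
      · simp [S]
      · have h3 : Real.sin (3 * θ) = 3 * Real.sin θ - 4 * Real.sin θ ^ 3 := by
          have := Real.sin_three_mul θ
          linarith
        simp only [S]
        push_cast
        rw [show (2:ℝ) * 0 + 3 = 3 by ring, h3]
        field_simp
        linear_combination (4 * Real.sin θ) * Real.sin_sq_add_cos_sq θ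
    | succ n ih =>
      have e1 := ih.1
      have e2 := ih.2
      constructor
      · push_cast; convert e2 using 3; ring
      · have hrec : S 1 1 (-1 / (4 * Real.cos θ ^ 2)) (n+2)
            = (1 + 2 * (-1 / (4 * Real.cos θ ^ 2))) * S 1 1 (-1 / (4 * Real.cos θ ^ 2)) (n+1)
              - (-1 / (4 * Real.cos θ ^ 2)) ^ 2 * S 1 1 (-1 / (4 * Real.cos θ ^ 2)) n := rfl
        have trig : Real.sin ((2 * ((n:ℝ)+1) + 3) * θ)
            = (4 * Real.cos θ ^ 2 - 2) * Real.sin ((2 * (n:ℝ) + 3) * θ)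
              - Real.sin ((2 * (n:ℝ) + 1) * θ) := by
          have c2 : Real.cos (2*θ) = 2 * Real.cos θ ^ 2 - 1 := Real.cos_two_mul θ
          have a1 : (2 * ((n:ℝ)+1) + 3) * θ = (2 * ((n:ℝ)) + 3) * θ + 2*θ := by ring
          have a2 : (2 * (n:ℝ) + 1) * θ = (2 * ((n:ℝ)) + 3) * θ - 2*θ := by ring
          rw [a1, a2, Real.sin_add, Real.sin_sub, c2]
          ring
        rw [hrec]
        push_cast
        rw [trig, ← e1, ← e2]
        field_simp
        ring
  intro n
  have := (key2 n).1
  convert this using 3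

noncomputable def Spoly : ℕ → Polynomial ℝ
  | 0 => 1
  | 1 => Polynomial.X + 1
  | n + 2 => (1 + 2 * Polynomial.X) * Spoly (n + 1) - Polynomial.X ^ 2 * Spoly n

lemma Spoly_deg : ∀ n, (Spoly n).natDegree ≤ n ∧ (Spoly n).coeff n = 1 := by
  have H : ∀ n, ((Spoly n).natDegree ≤ n ∧ (Spoly n).coeff n = 1)
      ∧ ((Spoly (n+1)).natDegree ≤ n+1 ∧ (Spoly (n+1)).coeff (n+1) = 1) := by
    intro n
    induction n with
    | zero =>
      refine ⟨⟨?_, ?_⟩, ?_, ?_⟩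
      · simp [Spoly]
      · simp [Spoly]
      · show (Polynomial.X + 1 : Polynomial ℝ).natDegree ≤ 1
        compute_degree
      · show (Polynomial.X + 1 : Polynomial ℝ).coeff 1 = 1
        simp [coeff_one]
    | succ n ih =>
      have hrw : Spoly (n+2) = (1 + 2 * Polynomial.X) * Spoly (n + 1)
          - Polynomial.X ^ 2 * Spoly n := rfl
      have hd1 : ((1 + 2 * Polynomial.X) * Spoly (n + 1)).natDegree ≤ n + 2 := by
        refine natDegree_mul_le.trans ?_
        have h1 : (1 + 2 * Polynomial.X : Polynomial ℝ).natDegree ≤ 1 := by compute_degree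
        have := ih.2.1
        omega
      have hd2 : (Polynomial.X ^ 2 * Spoly n : Polynomial ℝ).natDegree ≤ n + 2 := by
        refine natDegree_mul_le.trans ?_
        have := ih.1.1
        have h2 : (Polynomial.X ^ 2 : Polynomial ℝ).natDegree ≤ 2 := by compute_degree
        omega
      refine ⟨ih.2, ?_, ?_⟩
      · rw [hrw]
        exact (natDegree_sub_le _ _).trans (by simp [hd1, hd2])
      · rw [hrw, coeff_sub]
        have c1 : ((1 + 2 * Polynomial.X) * Spoly (n + 1)).coeff (n+2)
            = (Spoly (n+1)).coeff (n+2) + 2 * (Spoly (n+1)).coeff (n+1) := by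
          rw [add_mul, one_mul, coeff_add, mul_assoc]
          simp [coeff_X_mul, coeff_ofNat_mul]
        have c2 : (Polynomial.X ^ 2 * Spoly n : Polynomial ℝ).coeff (n+2) = (Spoly n).coeff n :=
          coeff_X_pow_mul _ 2 n
        rw [c1, c2, coeff_eq_zero_of_natDegree_lt (lt_of_le_of_lt ih.2.1 (by omega)),
          ih.2.2, ih.1.2]
        ring
  exact fun n => (H n).1

lemma Spoly_eval (t : ℝ) : ∀ n, (Spoly n).eval t = S 1 1 t n := by
  have H : ∀ n, (Spoly n).eval t = S 1 1 t n ∧ (Spoly (n+1)).eval t = S 1 1 t (n+1) := by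
    intro n
    induction n with
    | zero => constructor <;> simp [Spoly, S]
    | succ n ih =>
      refine ⟨ih.2, ?_⟩
      show (Spoly (n+2)).eval t = S 1 1 t (n+2)
      rw [show Spoly (n+2) = (1 + 2 * Polynomial.X) * Spoly (n + 1) - Polynomial.X ^ 2 * Spoly n from rfl,
        show S 1 1 t (n+2) = (1 + 2*t) * S 1 1 t (n+1) - t^2 * S 1 1 t n from rfl]
      simp [ih.1, ih.2]
  exact fun n => (H n).1

/-- `Sₙ(1,1;t) = ∏_{k=1}^{n} (t + 1/(2 + 2 cos(2kπ/(2n+1))))`. -/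
theorem S_one_one_roots (n : ℕ) (hn : 1 ≤ n) (t : ℝ) :
    S 1 1 t n =
      ∏ k ∈ Finset.Icc 1 n,
        (t + 1 / (2 + 2 * Real.cos (2 * (k : ℝ) * π / (2 * n + 1)))) := by
  have hN : (0:ℝ) < 2 * (n:ℝ) + 1 := by positivity
  set r : ℕ → ℝ := fun k => -1 / (2 + 2 * Real.cos (2 * (k : ℝ) * π / (2 * n + 1))) with hr
  -- basic facts about θ_k
  have hθ : ∀ k ∈ Finset.Icc 1 n, 0 < (k:ℝ) * π / (2 * n + 1) ∧
      (k:ℝ) * π / (2 * n + 1) < π / 2 := by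
    intro k hk
    rw [Finset.mem_Icc] at hk
    constructor
    · have : (0:ℝ) < (k:ℝ) := by exact_mod_cast Nat.lt_of_lt_of_le Nat.zero_lt_one hk.1
      positivity
    · rw [div_lt_iff₀ hN]
      have hk2 : (k:ℝ) ≤ (n:ℝ) := by exact_mod_cast hk.2
      nlinarith [Real.pi_pos]
  have hcos : ∀ k ∈ Finset.Icc 1 n, 0 < Real.cos ((k:ℝ) * π / (2 * n + 1)) := by
    intro k hk
    obtain ⟨h1, h2⟩ := hθ k hk
    exact Real.cos_pos_of_mem_Ioo ⟨by linarith [Real.pi_pos], h2⟩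
  have hsin : ∀ k ∈ Finset.Icc 1 n, 0 < Real.sin ((k:ℝ) * π / (2 * n + 1)) := by
    intro k hk
    obtain ⟨h1, h2⟩ := hθ k hk
    exact Real.sin_pos_of_pos_of_lt_pi h1 (by linarith [Real.pi_pos])
  -- denominator identity
  have hden : ∀ k : ℕ, 2 + 2 * Real.cos (2 * (k : ℝ) * π / (2 * n + 1))
      = 4 * Real.cos ((k:ℝ) * π / (2 * n + 1)) ^ 2 := by
    intro k
    have : 2 * (k : ℝ) * π / (2 * n + 1) = 2 * ((k:ℝ) * π / (2 * n + 1)) := by ring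
    rw [this, Real.cos_two_mul]
    ring
  -- S vanishes at r k
  have hroot : ∀ k ∈ Finset.Icc 1 n, (Spoly n).eval (r k) = 0 := by
    intro k hk
    have hc := hcos k hk
    have hs := hsin k hk
    have hck : Real.cos ((k:ℝ) * π / (2 * n + 1)) ≠ 0 := ne_of_gt hc
    have hkey := key_s10 ((k:ℝ) * π / (2 * n + 1)) hck n
    have harg : (2 * (n:ℝ) + 1) * ((k:ℝ) * π / (2 * n + 1)) = (k:ℝ) * π := by
      field_simp
    rw [harg, Real.sin_nat_mul_pi] at hkey
    have hrk : r k = -1 / (4 * Real.cos ((k:ℝ) * π / (2 * n + 1)) ^ 2) := by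
      rw [hr]; simp only; rw [hden k]
    rw [Spoly_eval, hrk]
    have hne : Real.sin ((k:ℝ) * π / (2 * n + 1)) *
        (4 * Real.cos ((k:ℝ) * π / (2 * n + 1)) ^ 2) ^ n ≠ 0 := by positivity
    exact (mul_eq_zero.mp hkey).resolve_right hne
  -- injectivity of r on Icc 1 n
  have hinj : Set.InjOn r (Finset.Icc 1 n) := by
    intro k hk j hj hkj
    replace hk : k ∈ Finset.Icc 1 n := Finset.mem_coe.mp hk
    replace hj : j ∈ Finset.Icc 1 n := Finset.mem_coe.mp hj
    have hck := hcos k hk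
    have hcj := hcos j hj
    have hkd : (0:ℝ) < 2 + 2 * Real.cos (2 * (k : ℝ) * π / (2 * n + 1)) := by
      rw [hden]; positivity
    have hjd : (0:ℝ) < 2 + 2 * Real.cos (2 * (j : ℝ) * π / (2 * n + 1)) := by
      rw [hden]; positivity
    have hco : Real.cos (2 * (k : ℝ) * π / (2 * n + 1))
        = Real.cos (2 * (j : ℝ) * π / (2 * n + 1)) := by
      rw [hr] at hkj
      simp only at hkj
      field_simp at hkj
      rw [neg_inj, one_div, one_div, inv_inj, add_right_inj,
        show 2 * π * (j:ℝ) = 2 * (j:ℝ) * π by ring] at hkj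
      exact hkj
    have hmem : ∀ i : ℕ, i ∈ Finset.Icc 1 n → 2 * (i : ℝ) * π / (2 * n + 1) ∈ Set.Icc 0 π := by
      intro i hi
      obtain ⟨h1, h2⟩ := hθ i hi
      constructor
      · have : 2 * (i : ℝ) * π / (2 * n + 1) = 2 * ((i:ℝ) * π / (2 * n + 1)) := by ring
        rw [this]; linarith
      · have : 2 * (i : ℝ) * π / (2 * n + 1) = 2 * ((i:ℝ) * π / (2 * n + 1)) := by ring
        rw [this]; linarith
    have := Real.strictAntiOn_cos.injOn (hmem k hk) (hmem j hj) hco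
    have hpi := Real.pi_pos
    have : (k:ℝ) = (j:ℝ) := by
      field_simp at this
      linarith
    exact_mod_cast this
  -- the product polynomial
  have hcard : (Finset.Icc 1 n).card = n := by simp
  set Q : Polynomial ℝ := ∏ k ∈ Finset.Icc 1 n, (Polynomial.X - Polynomial.C (r k)) with hQ
  have hQmonic : Q.Monic := monic_prod_of_monic _ _ (fun k _ => monic_X_sub_C (r k))
  have hQdeg : Q.natDegree = n := by
    rw [hQ, natDegree_prod _ _ (fun k _ => X_sub_C_ne_zero (r k))]
    simp [natDegree_X_sub_C]
  have hQcoeff : Q.coeff n = 1 := by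
    have := hQmonic
    rw [Monic, leadingCoeff, hQdeg] at this
    exact this
  -- D := Spoly n - Q is zero
  have hD : Spoly n - Q = 0 := by
    by_contra hD0
    have hdle : (Spoly n - Q).natDegree ≤ n :=
      (natDegree_sub_le _ _).trans (by simp [hQdeg, (Spoly_deg n).1])
    have hcoeffD : (Spoly n - Q).coeff n = 0 := by
      rw [coeff_sub, (Spoly_deg n).2, hQcoeff, sub_self]
    have hdlt : (Spoly n - Q).natDegree < n := by
      rcases lt_or_eq_of_le hdle with h | h
      · exact h
      · exfalso
        have := leadingCoeff_ne_zero.mpr hD0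
        rw [leadingCoeff, h] at this
        exact this hcoeffD
    have heval : ∀ x ∈ (Finset.Icc 1 n).image r, (Spoly n - Q).eval x = 0 := by
      intro x hx
      obtain ⟨k, hk, rfl⟩ := Finset.mem_image.mp hx
      rw [eval_sub, hroot k hk, hQ, eval_prod]
      have : ∏ j ∈ Finset.Icc 1 n, ((Polynomial.X - Polynomial.C (r j)).eval (r k)) = 0 := by
        apply Finset.prod_eq_zero hk
        simp
      rw [this]
      simp
    have := Polynomial.eq_zero_of_natDegree_lt_card_of_eval_eq_zero' _ _ heval
      (by rwa [Finset.card_image_of_injOn hinj, hcard])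
    exact hD0 this
  have hSQ : Spoly n = Q := sub_eq_zero.mp hD
  have := congrArg (Polynomial.eval t) hSQ
  rw [Spoly_eval, hQ, eval_prod] at this
  rw [this]
  apply Finset.prod_congr rfl
  intro k hk
  simp [hr, sub_div, div_eq_mul_inv]
end

section
/- For every integer n ≥ 1 and every real t, (1/(2n+1))·S_n(3,1;t) = ∏_{k=1}^{n} ( t + 1/(2 + 2·cos((2k−1)π/(2n+1))) ), where S_n(3,1;t) is defined by the recurrence S_0 = 1, S_1 = 3t + 1, S_m = (1+2t)·S_{m-1} − t²·S_{m-2}. -/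
open Real

lemma S_two_step (a b t : ℝ) (m : ℕ) :
    S a b t (m + 2) = (1 + 2 * t) * S a b t (m + 1) - t ^ 2 * S a b t m := rfl

/-- Closed form for `S 3 1 t` after substituting `t = v² + v` (complex `v`). -/
lemma S_closed (t : ℝ) (v : ℂ) (hv : v ^ 2 + v = (t : ℂ)) :
    ∀ m : ℕ, ((S 3 1 t m : ℝ) : ℂ) = (v + 1) ^ (2 * m + 1) - v ^ (2 * m + 1) := by
  intro m
  induction m using Nat.strong_induction_on with
  | _ m ih =>
    match m with
    | 0 => simp [S]
    | 1 =>
      show ((3 * t + 1 : ℝ) : ℂ) = _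
      push_cast
      linear_combination (-3) * hv
    | (m + 2) =>
      have e1 := ih (m + 1) (by omega)
      have e0 := ih m (by omega)
      rw [S_two_step]
      push_cast
      rw [e1, e0, ← hv]
      ring

/-- Pairing of a product over `Icc 1 (2n)`. -/
lemma prod_pair {M : Type*} [CommMonoid M] (n : ℕ) (g : ℕ → M) :
    ∏ j ∈ Finset.Icc 1 (2 * n), g j
      = ∏ j ∈ Finset.Icc 1 n, (g j * g (2 * n + 1 - j)) := by
  have hsplit : Finset.Icc 1 (2 * n) = Finset.Icc 1 n ∪ Finset.Icc (n + 1) (2 * n) := by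
    ext x; simp only [Finset.mem_Icc, Finset.mem_union]; omega
  have hdisj : Disjoint (Finset.Icc 1 n) (Finset.Icc (n + 1) (2 * n)) := by
    rw [Finset.disjoint_left]; intro x hx hx'
    simp only [Finset.mem_Icc] at hx hx'; omega
  rw [hsplit, Finset.prod_union hdisj, Finset.prod_mul_distrib]
  congr 1
  refine Finset.prod_nbij' (fun j => 2 * n + 1 - j) (fun j => 2 * n + 1 - j) ?_ ?_ ?_ ?_ ?_
  · intro a ha; beta_reduce; simp only [Finset.mem_Icc] at *; omega
  · intro a ha; beta_reduce; simp only [Finset.mem_Icc] at *; omega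
  · intro a ha; beta_reduce; simp only [Finset.mem_Icc] at *; omega
  · intro a ha; beta_reduce; simp only [Finset.mem_Icc] at *; omega
  · intro a ha; beta_reduce; simp only [Finset.mem_Icc] at ha
    congr 1; omega

/-- `(1/(2n+1))·Sₙ(3,1;t) = ∏_{k=1}^{n} (t + 1/(2 + 2 cos((2k−1)π/(2n+1))))`. -/
theorem S_three_one_roots (n : ℕ) (hn : 1 ≤ n) (t : ℝ) :
    (1 / (2 * n + 1 : ℝ)) * S 3 1 t n =
      ∏ k ∈ Finset.Icc 1 n,
        (t + 1 / (2 + 2 * Real.cos ((2 * (k : ℝ) - 1) * π / (2 * n + 1)))) := by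
  have hN0 : (2 * n + 1 : ℕ) ≠ 0 := by omega
  have hNpos : 0 < 2 * n + 1 := by omega
  set N : ℕ := 2 * n + 1 with hNdef
  set ζ : ℂ := Complex.exp (2 * π * Complex.I / N) with hζdef
  have hζ : IsPrimitiveRoot ζ N := Complex.isPrimitiveRoot_exp N hN0
  -- the real coefficients
  set c : ℕ → ℝ := fun k => 2 + 2 * Real.cos ((2 * (k : ℝ) - 1) * π / (2 * n + 1)) with hcdef
  have hcpos : ∀ k ∈ Finset.Icc 1 n, 0 < c k := by
    intro k hk
    simp only [Finset.mem_Icc] at hk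
    have h1 : (0 : ℝ) ≤ (2 * (k : ℝ) - 1) * π / (2 * n + 1) := by
      apply div_nonneg
      · apply mul_nonneg _ Real.pi_pos.le
        have : (1 : ℝ) ≤ (k : ℝ) := by exact_mod_cast hk.1
        linarith
      · positivity
    have h2 : (2 * (k : ℝ) - 1) * π / (2 * n + 1) < π := by
      rw [div_lt_iff₀ (by positivity)]
      have : (k : ℝ) ≤ n := by exact_mod_cast hk.2
      nlinarith [Real.pi_pos]
    have := Real.cos_lt_cos_of_nonneg_of_le_pi h1 le_rfl h2
    rw [Real.cos_pi] at this
    simp only [hcdef]; linarith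
  -- ζ powers as exponentials
  have hzpow : ∀ j : ℕ, ζ ^ j = Complex.exp ((2 * π * j / N : ℝ) * Complex.I) := by
    intro j
    rw [hζdef, ← Complex.exp_nat_mul]
    congr 1
    push_cast
    field_simp
  have hzN : ζ ^ N = 1 := hζ.pow_eq_one
  have hzpair : ∀ j : ℕ, j ≤ 2 * n →
      ζ ^ (N - j) = Complex.exp (-((2 * π * j / N : ℝ) * Complex.I)) := by
    intro j hj
    have h : ζ ^ (N - j) * Complex.exp (((2 * π * j / N : ℝ) : ℂ) * Complex.I) = 1 := by
      rw [← hzpow j, ← pow_add, Nat.sub_add_cancel (by omega)]; exact hzN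
    have h2 : Complex.exp (-(((2 * π * j / N : ℝ) : ℂ) * Complex.I))
        * Complex.exp (((2 * π * j / N : ℝ) : ℂ) * Complex.I) = 1 := by
      rw [← Complex.exp_add]; simp
    exact mul_right_cancel₀ (Complex.exp_ne_zero _) (h.trans h2.symm)
  have hsum : ∀ j : ℕ, j ≤ 2 * n →
      ζ ^ j + ζ ^ (N - j) = 2 * ((Real.cos (2 * π * j / N) : ℝ) : ℂ) := by
    intro j hj
    rw [hzpow j, hzpair j hj]
    rw [Complex.ofReal_cos, Complex.two_cos, neg_mul]
  have hprodpair : ∀ j : ℕ, j ≤ 2 * n → ζ ^ j * ζ ^ (N - j) = 1 := by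
    intro j hj
    rw [← pow_add, Nat.add_sub_cancel' (by omega : j ≤ N)]
    exact hzN
  -- the nth roots finset is the image of powers of ζ
  have himg : Polynomial.nthRootsFinset N (1 : ℂ) = (Finset.range N).image (ζ ^ ·) := by
    ext x
    simp only [Polynomial.mem_nthRootsFinset hNpos, Finset.mem_image, Finset.mem_range]
    constructor
    · intro hx
      obtain ⟨i, hi, rfl⟩ := hζ.eq_pow_of_pow_eq_one hx
      exact ⟨i, hi, rfl⟩
    · rintro ⟨i, _, rfl⟩
      rw [← pow_mul, mul_comm, pow_mul, hzN, one_pow]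
  have hinj : ∀ a ∈ Finset.range N, ∀ b ∈ Finset.range N, ζ ^ a = ζ ^ b → a = b := by
    intro a ha b hb h
    exact hζ.injOn_pow (by simpa using ha) (by simpa using hb) h
  -- value-level factorization
  have hfact : ∀ x y : ℂ, x ^ N - y ^ N = ∏ i ∈ Finset.range N, (x - ζ ^ i * y) := by
    intro x y
    rw [IsPrimitiveRoot.pow_sub_pow_eq_prod_sub_mul x y hNpos hζ, himg, Finset.prod_image hinj]
  have hrange : Finset.range N = insert 0 (Finset.Icc 1 (2 * n)) := by
    ext x; simp only [Finset.mem_range, Finset.mem_insert, Finset.mem_Icc]; omega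
  have h0notin : (0 : ℕ) ∉ Finset.Icc 1 (2 * n) := by simp
  -- polynomial-level: product over Icc 1 (2n) is the geometric sum
  have hgeom : ∏ j ∈ Finset.Icc 1 (2 * n), ((1 : ℂ) - ζ ^ j) = (N : ℂ) := by
    have hP : ∏ i ∈ Finset.range N, ((Polynomial.X : Polynomial ℂ) - Polynomial.C (ζ ^ i))
        = Polynomial.X ^ N - 1 := by
      rw [Polynomial.X_pow_sub_one_eq_prod hNpos hζ, himg, Finset.prod_image hinj]
    rw [hrange, Finset.prod_insert h0notin] at hP
    have hQ : ∏ j ∈ Finset.Icc 1 (2 * n), ((Polynomial.X : Polynomial ℂ) - Polynomial.C (ζ ^ j))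
        = ∑ i ∈ Finset.range N, (Polynomial.X : Polynomial ℂ) ^ i := by
      have hx1 : ((Polynomial.X : Polynomial ℂ) - 1) ≠ 0 := by
        have := Polynomial.X_sub_C_ne_zero (1 : ℂ)
        simpa using this
      apply mul_left_cancel₀ hx1
      rw [mul_geom_sum]
      simpa using hP
    have := congrArg (Polynomial.eval 1) hQ
    simpa [Polynomial.eval_prod, Polynomial.eval_finset_sum] using this
  -- pair the constant product
  have hBC : ∏ j ∈ Finset.Icc 1 n, ((2 : ℂ) - 2 * ((Real.cos (2 * π * j / N) : ℝ) : ℂ))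
      = (N : ℂ) := by
    rw [← hgeom, prod_pair]
    apply Finset.prod_congr rfl
    intro j hj
    simp only [Finset.mem_Icc] at hj
    have hj2 : j ≤ 2 * n := by omega
    have h1 := hsum j hj2
    have h2 := hprodpair j hj2
    have hNj : 2 * n + 1 - j = N - j := by omega
    rw [hNj]
    have expand : ((1 : ℂ) - ζ ^ j) * (1 - ζ ^ (N - j))
        = 1 - (ζ ^ j + ζ ^ (N - j)) + ζ ^ j * ζ ^ (N - j) := by ring
    rw [expand, h1, h2]
    ring
  -- real version of the constant product
  have hB' : ∏ j ∈ Finset.Icc 1 n, (2 - 2 * Real.cos (2 * π * j / N)) = (N : ℝ) := by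
    have := hBC
    rw [show ∏ j ∈ Finset.Icc 1 n, ((2 : ℂ) - 2 * ((Real.cos (2 * π * j / N) : ℝ) : ℂ))
        = ((∏ j ∈ Finset.Icc 1 n, (2 - 2 * Real.cos (2 * π * j / N)) : ℝ) : ℂ) by
      push_cast; rfl] at this
    exact_mod_cast this
  -- reindexing j ↦ n + 1 - k turns 2 - 2cos φ into c k
  have hNcast : ((N : ℕ) : ℝ) = 2 * (n : ℝ) + 1 := by
    rw [hNdef]; push_cast; ring
  have hangle : ∀ k ∈ Finset.Icc 1 n,
      2 - 2 * Real.cos (2 * π * (n + 1 - k : ℕ) / N) = c k := by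
    intro k hk
    simp only [Finset.mem_Icc] at hk
    have hcast : ((n + 1 - k : ℕ) : ℝ) = (n : ℝ) + 1 - k := by
      have : k ≤ n + 1 := by omega
      push_cast [Nat.cast_sub this]
      ring
    rw [hcast, hNcast]
    have harg : 2 * π * ((n : ℝ) + 1 - k) / (2 * (n : ℝ) + 1)
        = π - (2 * (k : ℝ) - 1) * π / (2 * (n : ℝ) + 1) := by
      field_simp
      ring
    rw [harg, Real.cos_pi_sub]
    simp only [hcdef]
    ring
  have hB : ∏ k ∈ Finset.Icc 1 n, c k = 2 * (n : ℝ) + 1 := by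
    have h1 : ∏ j ∈ Finset.Icc 1 n, (2 - 2 * Real.cos (2 * π * j / N))
        = ∏ k ∈ Finset.Icc 1 n, (2 - 2 * Real.cos (2 * π * ((n + 1 - k : ℕ) : ℝ) / N)) := by
      refine Finset.prod_nbij' (fun j => n + 1 - j) (fun k => n + 1 - k) ?_ ?_ ?_ ?_ ?_
      · intro a ha; beta_reduce; simp only [Finset.mem_Icc] at *; omega
      · intro a ha; beta_reduce; simp only [Finset.mem_Icc] at *; omega
      · intro a ha; beta_reduce; simp only [Finset.mem_Icc] at *; omega
      · intro a ha; beta_reduce; simp only [Finset.mem_Icc] at *; omega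
      · intro a ha; beta_reduce; simp only [Finset.mem_Icc] at ha
        have h2 : n + 1 - (n + 1 - a) = a := by omega
        rw [h2]
    calc ∏ k ∈ Finset.Icc 1 n, c k
        = ∏ k ∈ Finset.Icc 1 n, (2 - 2 * Real.cos (2 * π * ((n + 1 - k : ℕ) : ℝ) / N)) :=
          (Finset.prod_congr rfl hangle).symm
      _ = ∏ j ∈ Finset.Icc 1 n, (2 - 2 * Real.cos (2 * π * j / N)) := h1.symm
      _ = (N : ℝ) := hB'
      _ = 2 * (n : ℝ) + 1 := hNcast
  -- obtain v with v² + v = t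
  obtain ⟨s, hs⟩ : ∃ s : ℂ, s ^ 2 = 1 + 4 * (t : ℂ) :=
    IsAlgClosed.exists_pow_nat_eq (1 + 4 * (t : ℂ)) (n := 2) (by norm_num)
  set v : ℂ := (s - 1) / 2 with hvdef
  have hv : v ^ 2 + v = (t : ℂ) := by
    rw [hvdef]
    field_simp
    linear_combination hs
  -- main identity over ℂ
  have hmain : ((S 3 1 t n : ℝ) : ℂ)
      = ∏ j ∈ Finset.Icc 1 n, (1 + (2 - 2 * ((Real.cos (2 * π * j / N) : ℝ) : ℂ)) * (t : ℂ)) := by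
    rw [S_closed t v hv n]
    have : (v + 1) ^ (2 * n + 1) - v ^ (2 * n + 1) = (v + 1) ^ N - v ^ N := by rw [hNdef]
    rw [this, hfact (v + 1) v, hrange, Finset.prod_insert h0notin]
    rw [pow_zero, one_mul, prod_pair]
    rw [show v + 1 - v = 1 by ring, one_mul]
    apply Finset.prod_congr rfl
    intro j hj
    simp only [Finset.mem_Icc] at hj
    have hj2 : j ≤ 2 * n := by omega
    have h1 := hsum j hj2
    have h2 := hprodpair j hj2
    have hNj : 2 * n + 1 - j = N - j := by omega
    rw [hNj]
    have expand : (v + 1 - ζ ^ j * v) * (v + 1 - ζ ^ (N - j) * v)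
        = (v + 1) ^ 2 - (ζ ^ j + ζ ^ (N - j)) * ((v + 1) * v) + (ζ ^ j * ζ ^ (N - j)) * v ^ 2 := by
      ring
    rw [expand, h1, h2, ← hv]
    ring
  -- real version of the main identity
  have hA' : S 3 1 t n = ∏ j ∈ Finset.Icc 1 n, (1 + (2 - 2 * Real.cos (2 * π * j / N)) * t) := by
    have := hmain
    rw [show ∏ j ∈ Finset.Icc 1 n, (1 + (2 - 2 * ((Real.cos (2 * π * j / N) : ℝ) : ℂ)) * (t : ℂ))
        = ((∏ j ∈ Finset.Icc 1 n, (1 + (2 - 2 * Real.cos (2 * π * j / N)) * t) : ℝ) : ℂ) by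
      push_cast; rfl] at this
    exact_mod_cast this
  have hA : S 3 1 t n = ∏ k ∈ Finset.Icc 1 n, (1 + c k * t) := by
    rw [hA']
    have h1 : ∏ j ∈ Finset.Icc 1 n, (1 + (2 - 2 * Real.cos (2 * π * j / N)) * t)
        = ∏ k ∈ Finset.Icc 1 n, (1 + (2 - 2 * Real.cos (2 * π * ((n + 1 - k : ℕ) : ℝ) / N)) * t) := by
      refine Finset.prod_nbij' (fun j => n + 1 - j) (fun k => n + 1 - k) ?_ ?_ ?_ ?_ ?_
      · intro a ha; beta_reduce; simp only [Finset.mem_Icc] at *; omega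
      · intro a ha; beta_reduce; simp only [Finset.mem_Icc] at *; omega
      · intro a ha; beta_reduce; simp only [Finset.mem_Icc] at *; omega
      · intro a ha; beta_reduce; simp only [Finset.mem_Icc] at *; omega
      · intro a ha; beta_reduce; simp only [Finset.mem_Icc] at ha
        have h2 : n + 1 - (n + 1 - a) = a := by omega
        rw [h2]
    rw [h1]
    exact Finset.prod_congr rfl fun k hk => by rw [hangle k hk]
  -- finish
  have hfinal : ∀ k ∈ Finset.Icc 1 n,
      t + 1 / (2 + 2 * Real.cos ((2 * (k : ℝ) - 1) * π / (2 * n + 1)))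
        = (1 + c k * t) * (c k)⁻¹ := by
    intro k hk
    have h := hcpos k hk
    have hne : c k ≠ 0 := ne_of_gt h
    rw [show (2 + 2 * Real.cos ((2 * (k : ℝ) - 1) * π / (2 * n + 1))) = c k from rfl]
    field_simp
    ring
  rw [Finset.prod_congr rfl hfinal, Finset.prod_mul_distrib, Finset.prod_inv_distrib, hB,
    ← hA]
  ring
end

section
/- For all real numbers a, b, t and every integer n ≥ 1, S_n(2,1;t)·S_n(a,b;t) − S_{n-1}(2,1;t)·S_{n+1}(a,b;t) = t^{2n}, where both sequences are defined by the recurrence S_0(a,b;t) = 1, S_1(a,b;t) = a·t + b, S_m(a,b;t) = (1+2t)·S_{m-1}(a,b;t) − t²·S_{m-2}(a,b;t). -/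
lemma S_det_aux (a b t : ℝ) (n : ℕ) :
    S 2 1 t (n + 1) * S a b t (n + 1) - S 2 1 t n * S a b t (n + 2) = t ^ (2 * (n + 1)) := by
  induction n with
  | zero => simp [S]; ring
  | succ k ih =>
    have h1 : S 2 1 t (k + 2) = (1 + 2 * t) * S 2 1 t (k + 1) - t ^ 2 * S 2 1 t k := rfl
    have h2 : S a b t (k + 3) = (1 + 2 * t) * S a b t (k + 2) - t ^ 2 * S a b t (k + 1) := rfl
    have : S 2 1 t (k + 2) * S a b t (k + 2) - S 2 1 t (k + 1) * S a b t (k + 3) =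
        t ^ 2 * (S 2 1 t (k + 1) * S a b t (k + 1) - S 2 1 t k * S a b t (k + 2)) := by
      rw [h1, h2]; ring
    rw [this, ih]; ring

/-- For `n ≥ 1`: `Sₙ(2,1;t)·Sₙ(a,b;t) − Sₙ₋₁(2,1;t)·Sₙ₊₁(a,b;t) = t^{2n}`. -/
theorem S_determinant_identity (a b t : ℝ) (n : ℕ) (hn : 1 ≤ n) :
    S 2 1 t n * S a b t n - S 2 1 t (n - 1) * S a b t (n + 1) = t ^ (2 * n) := by
  obtain ⟨m, rfl⟩ := Nat.exists_eq_add_of_le hn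
  have h : 1 + m = m + 1 := by omega
  rw [h]
  simpa using S_det_aux a b t m
end

section
/- For all real numbers s, t and every integer n ≥ 1, the determinant of the n×n real matrix A_n(s,t) with (i,j) entry min{i,j} + s + t·δ_{ij} (indices i,j running over 1,…,n, δ the Kronecker delta) equals S_n(1, s+1; t), the value of the sequence defined by S_0 = 1, S_1 = t + s + 1, S_m = (1+2t)·S_{m-1} − t²·S_{m-2}. -/
open Matrix


/-- The `n×n` matrix `Aₙ(s,t)` with `(i,j)` entry `min{i,j} + s + t·δᵢⱼ`
(indices `1,…,n`). -/
def A (n : ℕ) (s t : ℝ) : Matrix (Fin n) (Fin n) ℝ :=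
  Matrix.of fun i j =>
    ((min (i.1 + 1) (j.1 + 1) : ℕ) : ℝ) + s + if i = j then t else 0

/-- entry function on ℕ -/
def av (s t : ℝ) (a b : ℕ) : ℝ :=
  ((min (a + 1) (b + 1) : ℕ) : ℝ) + s + if a = b then t else 0

lemma A_apply (n : ℕ) (s t : ℝ) (i j : Fin n) : A n s t i j = av s t i.1 j.1 := by
  simp [A, av, Fin.ext_iff]

/-- tridiagonal entry function -/
def tval (s t : ℝ) (a b : ℕ) : ℝ :=
  if a = b then (if a = 0 then 1 + s + t else 1 + 2 * t)
  else if a = b + 1 ∨ b = a + 1 then -t else 0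

/-- tridiagonal matrix -/
def Tm (s t : ℝ) (n : ℕ) : Matrix (Fin n) (Fin n) ℝ :=
  Matrix.of fun i j => tval s t i.1 j.1

lemma Tm_apply (s t : ℝ) {n : ℕ} (i j : Fin n) : Tm s t n i j = tval s t i.1 j.1 := rfl

/-- row-difference matrix -/
def Em (n : ℕ) : Matrix (Fin n) (Fin n) ℝ :=
  Matrix.of fun i j => if i.1 = j.1 then 1 else if i.1 = j.1 + 1 then -1 else 0

lemma det_Em (n : ℕ) : (Em n).det = 1 := by
  rw [Matrix.det_of_lowerTriangular (Em n) ?h]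
  · simp [Em]
  · intro i j h
    simp only [Em, Matrix.of_apply]
    have : i.1 < j.1 := h
    rw [if_neg (by omega), if_neg (by omega)]

lemma sum_ite_val {n : ℕ} (f : Fin n → ℝ) (c : ℕ) (hc : c < n) :
    (∑ k : Fin n, if k.1 = c then f k else 0) = f ⟨c, hc⟩ := by
  have h : ∀ k : Fin n, (if k.1 = c then f k else 0) = (if k = ⟨c, hc⟩ then f k else 0) := by
    intro k; simp [Fin.ext_iff]
  simp_rw [h]
  simp [Finset.sum_ite_eq']

lemma sum_ite_succ_val {n : ℕ} (f : Fin n → ℝ) (c : ℕ) :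
    (∑ k : Fin n, if c = k.1 + 1 then f k else 0)
      = if hc : 1 ≤ c ∧ c - 1 < n then f ⟨c - 1, hc.2⟩ else 0 := by
  split_ifs with hc
  · have h : ∀ k : Fin n, (if c = k.1 + 1 then f k else 0)
        = (if k = ⟨c - 1, hc.2⟩ then f k else 0) := by
      intro k; simp only [Fin.ext_iff]; congr 1; simp; omega
    simp_rw [h]
    simp [Finset.sum_ite_eq']
  · apply Finset.sum_eq_zero
    intro k _
    rw [if_neg (by omega)]

lemma Em_mul_apply {n : ℕ} (M : Matrix (Fin n) (Fin n) ℝ) (i j : Fin n) :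
    (Em n * M) i j
      = M i j - if hc : 1 ≤ i.1 ∧ i.1 - 1 < n then M ⟨i.1 - 1, hc.2⟩ j else 0 := by
  have h : ∀ k : Fin n, Em n i k * M k j
      = (if k.1 = i.1 then M k j else 0) - (if i.1 = k.1 + 1 then M k j else 0) := by
    intro k
    simp only [Em, Matrix.of_apply]
    by_cases h1 : i.1 = k.1
    · rw [if_pos h1, if_pos h1.symm, if_neg (by omega)]; ring
    · by_cases h2 : i.1 = k.1 + 1
      · rw [if_neg h1, if_pos h2, if_neg (by omega : ¬ k.1 = i.1), if_pos h2]; ring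
      · rw [if_neg h1, if_neg h2, if_neg (by omega : ¬ k.1 = i.1), if_neg h2]; ring
  rw [Matrix.mul_apply]
  simp_rw [h]
  rw [Finset.sum_sub_distrib, sum_ite_val (fun k => M k j) i.1 i.2, sum_ite_succ_val]

lemma mul_EmT_apply {n : ℕ} (M : Matrix (Fin n) (Fin n) ℝ) (i j : Fin n) :
    (M * (Em n)ᵀ) i j
      = M i j - if hc : 1 ≤ j.1 ∧ j.1 - 1 < n then M i ⟨j.1 - 1, hc.2⟩ else 0 := by
  have h : ∀ k : Fin n, M i k * (Em n)ᵀ k j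
      = (if k.1 = j.1 then M i k else 0) - (if j.1 = k.1 + 1 then M i k else 0) := by
    intro k
    simp only [Em, Matrix.of_apply, Matrix.transpose_apply]
    by_cases h1 : j.1 = k.1
    · rw [if_pos h1, if_pos h1.symm, if_neg (by omega)]; ring
    · by_cases h2 : j.1 = k.1 + 1
      · rw [if_neg h1, if_pos h2, if_neg (by omega : ¬ k.1 = j.1), if_pos h2]; ring
      · rw [if_neg h1, if_neg h2, if_neg (by omega : ¬ k.1 = j.1), if_neg h2]; ring
  rw [Matrix.mul_apply]
  simp_rw [h]
  rw [Finset.sum_sub_distrib, sum_ite_val (fun k => M i k) j.1 j.2, sum_ite_succ_val]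

lemma EAE_apply (n : ℕ) (s t : ℝ) (i j : Fin n) :
    (Em n * A n s t * (Em n)ᵀ) i j =
      (av s t i.1 j.1 - if 1 ≤ i.1 then av s t (i.1 - 1) j.1 else 0)
        - (if 1 ≤ j.1 then
            av s t i.1 (j.1 - 1) - (if 1 ≤ i.1 then av s t (i.1 - 1) (j.1 - 1) else 0)
          else 0) := by
  have hi2 : i.1 - 1 < n := lt_of_le_of_lt (Nat.sub_le _ _) i.2
  have hj2 : j.1 - 1 < n := lt_of_le_of_lt (Nat.sub_le _ _) j.2
  rw [mul_EmT_apply]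
  by_cases hj : 1 ≤ j.1
  · rw [dif_pos ⟨hj, hj2⟩, if_pos hj, Em_mul_apply, Em_mul_apply]
    by_cases hi : 1 ≤ i.1
    · rw [dif_pos ⟨hi, hi2⟩, dif_pos ⟨hi, hi2⟩, if_pos hi, if_pos hi]
      simp only [A_apply]
    · rw [dif_neg (by omega), dif_neg (by omega), if_neg hi, if_neg hi]
      simp only [A_apply]
  · rw [dif_neg (by omega), if_neg hj, Em_mul_apply]
    by_cases hi : 1 ≤ i.1
    · rw [dif_pos ⟨hi, hi2⟩, if_pos hi]
      simp only [A_apply]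
    · rw [dif_neg (by omega), if_neg hi]
      simp only [A_apply]

lemma calc_all (s t : ℝ) (a b : ℕ) :
    (av s t a b - if 1 ≤ a then av s t (a - 1) b else 0)
      - (if 1 ≤ b then
          av s t a (b - 1) - (if 1 ≤ a then av s t (a - 1) (b - 1) else 0)
        else 0)
    = tval s t a b := by
  unfold tval
  by_cases ha : 1 ≤ a
  · obtain ⟨a', rfl⟩ : ∃ a', a = a' + 1 := ⟨a - 1, by omega⟩
    by_cases hb : 1 ≤ b
    · obtain ⟨b', rfl⟩ : ∃ b', b = b' + 1 := ⟨b - 1, by omega⟩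
      simp only [if_pos ha, if_pos hb, Nat.add_sub_cancel]
      by_cases h1 : a' = b'
      · simp only [av, if_pos (show a' + 1 = b' + 1 by omega),
          if_neg (show ¬ a' + 1 = 0 by omega),
          if_neg (show ¬ a' = b' + 1 by omega), if_neg (show ¬ a' + 1 = b' by omega),
          if_pos h1,
          show min (a' + 1 + 1) (b' + 1 + 1) = a' + 2 by omega,
          show min (a' + 1) (b' + 1 + 1) = a' + 1 by omega,
          show min (a' + 1 + 1) (b' + 1) = a' + 1 by omega,
          show min (a' + 1) (b' + 1) = a' + 1 by omega]
        push_cast; ring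
      · by_cases h2 : a' = b' + 1
        · simp only [av, if_neg (show ¬ a' + 1 = b' + 1 by omega), if_pos h2,
            if_neg (show ¬ a' + 1 = b' by omega), if_neg h1,
            if_pos (show a' + 1 = b' + 1 + 1 ∨ b' + 1 = a' + 1 + 1 by omega),
            show min (a' + 1 + 1) (b' + 1 + 1) = b' + 2 by omega,
            show min (a' + 1) (b' + 1 + 1) = b' + 2 by omega,
            show min (a' + 1 + 1) (b' + 1) = b' + 1 by omega,
            show min (a' + 1) (b' + 1) = b' + 1 by omega]
          push_cast; ring
        · by_cases h3 : b' = a' + 1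
          · simp only [av, if_neg (show ¬ a' + 1 = b' + 1 by omega), if_neg h2,
              if_pos (show a' + 1 = b' by omega), if_neg h1,
              if_pos (show a' + 1 = b' + 1 + 1 ∨ b' + 1 = a' + 1 + 1 by omega),
              show min (a' + 1 + 1) (b' + 1 + 1) = a' + 2 by omega,
              show min (a' + 1) (b' + 1 + 1) = a' + 1 by omega,
              show min (a' + 1 + 1) (b' + 1) = a' + 2 by omega,
              show min (a' + 1) (b' + 1) = a' + 1 by omega]
            push_cast; ring
          · rcases Nat.lt_or_ge a' b' with h4 | h4
            · simp only [av, if_neg (show ¬ a' + 1 = b' + 1 by omega), if_neg h2,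
                if_neg (show ¬ a' + 1 = b' by omega), if_neg h1,
                if_neg (show ¬ (a' + 1 = b' + 1 + 1 ∨ b' + 1 = a' + 1 + 1) by omega),
                show min (a' + 1 + 1) (b' + 1 + 1) = a' + 2 by omega,
                show min (a' + 1) (b' + 1 + 1) = a' + 1 by omega,
                show min (a' + 1 + 1) (b' + 1) = a' + 2 by omega,
                show min (a' + 1) (b' + 1) = a' + 1 by omega]
              push_cast; ring
            · simp only [av, if_neg (show ¬ a' + 1 = b' + 1 by omega), if_neg h2,
                if_neg (show ¬ a' + 1 = b' by omega), if_neg h1,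
                if_neg (show ¬ (a' + 1 = b' + 1 + 1 ∨ b' + 1 = a' + 1 + 1) by omega),
                show min (a' + 1 + 1) (b' + 1 + 1) = b' + 2 by omega,
                show min (a' + 1) (b' + 1 + 1) = b' + 2 by omega,
                show min (a' + 1 + 1) (b' + 1) = b' + 1 by omega,
                show min (a' + 1) (b' + 1) = b' + 1 by omega]
              push_cast; ring
    · -- b = 0
      simp only [if_pos ha, if_neg hb, Nat.add_sub_cancel]
      by_cases h1 : a' = 0
      · simp only [av, if_neg (show ¬ a' + 1 = b by omega), if_pos (show a' = b by omega),
          if_neg (show ¬ a' + 1 = 0 by omega),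
          if_pos (show a' + 1 = b + 1 ∨ b = a' + 1 + 1 by omega),
          show min (a' + 1 + 1) (b + 1) = 1 by omega,
          show min (a' + 1) (b + 1) = 1 by omega]
        push_cast; ring
      · simp only [av, if_neg (show ¬ a' + 1 = b by omega), if_neg (show ¬ a' = b by omega),
          if_neg (show ¬ a' + 1 = 0 by omega),
          if_neg (show ¬ (a' + 1 = b + 1 ∨ b = a' + 1 + 1) by omega),
          show min (a' + 1 + 1) (b + 1) = 1 by omega,
          show min (a' + 1) (b + 1) = 1 by omega]
        push_cast; ring
  · by_cases hb : 1 ≤ b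
    · obtain ⟨b', rfl⟩ : ∃ b', b = b' + 1 := ⟨b - 1, by omega⟩
      simp only [if_neg ha, if_pos hb, Nat.add_sub_cancel]
      by_cases h1 : b' = 0
      · simp only [av, if_neg (show ¬ a = b' + 1 by omega), if_pos (show a = b' by omega),
          if_neg (show ¬ a = 0 → False by omega; ),
          show min (a + 1) (b' + 1 + 1) = 1 by omega,
          show min (a + 1) (b' + 1) = 1 by omega,
          if_pos (show a = b' + 1 + 1 ∨ b' + 1 = a + 1 by omega)]
        push_cast; ring
      · simp only [av, if_neg (show ¬ a = b' + 1 by omega), if_neg (show ¬ a = b' by omega),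
          if_neg (show ¬ (a = b' + 1 + 1 ∨ b' + 1 = a + 1) by omega),
          show min (a + 1) (b' + 1 + 1) = 1 by omega,
          show min (a + 1) (b' + 1) = 1 by omega]
        push_cast; ring
    · simp only [if_neg ha, if_neg hb, av, if_pos (show a = b by omega),
        if_pos (show a = 0 by omega), show min (a + 1) (b + 1) = 1 by omega]
      push_cast; ring

lemma EAE (n : ℕ) (s t : ℝ) : Em n * A n s t * (Em n)ᵀ = Tm s t n := by
  ext i j
  rw [EAE_apply, calc_all, Tm_apply]

lemma det_A_eq_det_Tm (n : ℕ) (s t : ℝ) : (A n s t).det = (Tm s t n).det := by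
  rw [← EAE n s t, Matrix.det_mul, Matrix.det_mul, Matrix.det_transpose, det_Em]
  ring

lemma succAbove_castSucc_last_val (m : ℕ) (j : Fin (m + 1)) :
    ((((Fin.last m).castSucc).succAbove j : Fin (m + 2)) : ℕ)
      = if j.1 < m then j.1 else j.1 + 1 := by
  rcases Nat.lt_or_ge j.1 m with h | h
  · rw [Fin.succAbove_of_castSucc_lt _ _ (by simp [Fin.lt_def, h]), if_pos h]
    simp
  · rw [Fin.succAbove_of_le_castSucc _ _ (by simp [Fin.le_def]; omega), if_neg (by omega)]
    simp

lemma detN (s t : ℝ) (m : ℕ) :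
    ((Tm s t (m + 2)).submatrix (Fin.last (m + 1)).succAbove
        ((Fin.last m).castSucc).succAbove).det = -t * (Tm s t m).det := by
  rw [Matrix.det_succ_column _ (Fin.last m), Fin.sum_univ_castSucc]
  have hz : ∀ i : Fin m,
      ((Tm s t (m + 2)).submatrix (Fin.last (m + 1)).succAbove
        ((Fin.last m).castSucc).succAbove) i.castSucc (Fin.last m) = 0 := by
    intro i
    have hi := i.2
    simp only [Matrix.submatrix_apply, Fin.succAbove_last, Tm_apply, tval,
      Fin.coe_castSucc, succAbove_castSucc_last_val, Fin.val_last]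
    rw [if_neg (lt_irrefl m), if_neg (by omega), if_neg (by omega)]
  simp only [hz, mul_zero, zero_mul, Finset.sum_const_zero, zero_add]
  have he : ((Tm s t (m + 2)).submatrix (Fin.last (m + 1)).succAbove
      ((Fin.last m).castSucc).succAbove) (Fin.last m) (Fin.last m) = -t := by
    simp only [Matrix.submatrix_apply, Fin.succAbove_last, Tm_apply, tval,
      Fin.coe_castSucc, succAbove_castSucc_last_val, Fin.val_last]
    rw [if_neg (lt_irrefl m), if_neg (by omega), if_pos (by omega)]
  have hsub : (((Tm s t (m + 2)).submatrix (Fin.last (m + 1)).succAbove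
        ((Fin.last m).castSucc).succAbove).submatrix
          (Fin.last m).succAbove (Fin.last m).succAbove) = Tm s t m := by
    ext a b
    have hb := b.2
    simp only [Matrix.submatrix_apply, Fin.succAbove_last, Tm_apply, tval,
      Fin.coe_castSucc, succAbove_castSucc_last_val]
    rw [if_pos (by omega : (b.1 : ℕ) < m)]
  rw [he, hsub]
  simp only [Fin.val_last, Fin.coe_castSucc]
  rw [show ((-1 : ℝ)) ^ (m + m) = 1 from Even.neg_one_pow ⟨m, by ring⟩]
  ring

lemma detT_rec (s t : ℝ) (m : ℕ) :
    (Tm s t (m + 2)).det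
      = (1 + 2 * t) * (Tm s t (m + 1)).det - t ^ 2 * (Tm s t m).det := by
  rw [Matrix.det_succ_row (Tm s t (m + 2)) (Fin.last (m + 1)),
    Fin.sum_univ_castSucc, Fin.sum_univ_castSucc]
  have hz : ∀ j : Fin m,
      Tm s t (m + 2) (Fin.last (m + 1)) ((j.castSucc).castSucc) = 0 := by
    intro j
    have hj := j.2
    simp only [Tm_apply, tval, Fin.coe_castSucc, Fin.val_last]
    rw [if_neg (by omega), if_neg (by omega)]
  simp only [hz, mul_zero, zero_mul, Finset.sum_const_zero, zero_add]
  have he1 : Tm s t (m + 2) (Fin.last (m + 1)) ((Fin.last m).castSucc) = -t := by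
    simp only [Tm_apply, tval, Fin.coe_castSucc, Fin.val_last]
    rw [if_neg (by omega), if_pos (Or.inl trivial)]
  have he2 : Tm s t (m + 2) (Fin.last (m + 1)) (Fin.last (m + 1)) = 1 + 2 * t := by
    simp only [Tm_apply, tval, Fin.val_last]
    simp
  have hsub2 : (Tm s t (m + 2)).submatrix (Fin.last (m + 1)).succAbove
      (Fin.last (m + 1)).succAbove = Tm s t (m + 1) := by
    ext a b
    simp only [Matrix.submatrix_apply, Fin.succAbove_last, Tm_apply, tval,
      Fin.coe_castSucc]
  rw [he1, he2, detN, hsub2]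
  simp only [Fin.val_last, Fin.coe_castSucc]
  rw [show ((-1 : ℝ)) ^ (m + 1 + m) = -1 from Odd.neg_one_pow ⟨m, by ring⟩,
    show ((-1 : ℝ)) ^ (m + 1 + (m + 1)) = 1 from Even.neg_one_pow ⟨m + 1, by ring⟩]
  ring

lemma detT_eq_S (s t : ℝ) (n : ℕ) : (Tm s t n).det = S 1 (s + 1) t n := by
  induction n using Nat.strong_induction_on with
  | _ n ih =>
    match n with
    | 0 => simp [S]
    | 1 =>
      rw [Matrix.det_fin_one]
      simp only [Tm_apply, tval, S]
      norm_num; ring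
    | (m + 2) =>
      rw [detT_rec, ih (m + 1) (by omega), ih m (by omega)]
      simp [S]

/-- `det Aₙ(s,t) = Sₙ(1,s+1;t)`. -/
theorem det_A (s t : ℝ) (n : ℕ) (hn : 1 ≤ n) :
    (A n s t).det = S 1 (s + 1) t n := by
  rw [det_A_eq_det_Tm, detT_eq_S]
end
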